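/- arXiv:1503.00408 — 4 statements merged into one kernel-verified Lean document; each statement's English description precedes it below -/
import Mathlib

section
/- Let (W,S) be a Coxeter system with length function l, and let u, v, w ∈ W satisfy l(uv) = l(u) + l(v) and l(uw) = l(u) + l(w). Then uv ≤ uw in the Bruhat order if and only if v ≤ w in the Bruhat order. -/
open List

namespace CoxeterSystem

attribute [local instance] Classical.propDecidable

variable {B W : Type*} [Group W] {M : CoxeterMatrix B} (cs : CoxeterSystem M W)

local prefix:100 "s" => cs.simple
local prefix:100 "π" => cs.wordProd
local prefix:100 "ℓ" => cs.length
local prefix:100 "ris" => cs.rightInvSeq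

/-! ### Basic facts -/

lemma brConjCancel (i : B) (x : W) : s i * (s i * x * s i) * s i = x := by
  rw [← mul_assoc, ← mul_assoc, cs.simple_mul_simple_self, one_mul,
    cs.simple_mul_simple_cancel_right]

lemma brConjEqIff (i : B) (x : W) : (s i * x * s i = s i) ↔ x = s i := by
  constructor
  · intro h
    have h' : s i * (s i * x * s i) * s i = s i * s i * s i := by rw [h]
    rwa [cs.brConjCancel, cs.simple_mul_simple_self, one_mul] at h'
  · rintro rfl
    rw [cs.simple_mul_simple_self, one_mul]

lemma brRightInvSeqCons (i : B) (ω : List B) :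
    ris (i :: ω) = ((π ω)⁻¹ * s i * π ω) :: ris ω := rfl

/-! ### The sign representation on `W × ℤˣ` -/

private noncomputable def brPrFun (i : B) : W × ℤˣ → W × ℤˣ :=
  fun p => (s i * p.1 * s i, if p.1 = s i then -p.2 else p.2)

private lemma brPrFun_invol (i : B) : Function.Involutive (cs.brPrFun i) := by
  rintro ⟨t, ε⟩
  simp only [brPrFun]
  rw [Prod.mk.injEq]
  constructor
  · exact cs.brConjCancel i t
  · by_cases h : t = s i
    · simp [h, cs.simple_mul_simple_self, one_mul]
    · simp [h, show ¬(s i * t * s i = s i) from fun hh => h ((cs.brConjEqIff i t).mp hh)]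

noncomputable def brPr (i : B) : Equiv.Perm (W × ℤˣ) := (cs.brPrFun_invol i).toPerm

lemma brPr_apply (i : B) (p : W × ℤˣ) :
    cs.brPr i p = (s i * p.1 * s i, if p.1 = s i then -p.2 else p.2) := rfl

lemma brProdPr_apply (γ : List B) (t : W) (ε : ℤˣ) :
    (γ.map cs.brPr).prod (t, ε) =
      (π γ * t * (π γ)⁻¹, if Even ((ris γ).count t) then ε else -ε) := by
  induction γ with
  | nil => simp
  | cons i γ ih =>
    rw [map_cons, prod_cons, Equiv.Perm.mul_apply, ih, brPr_apply]
    rw [Prod.mk.injEq]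
    constructor
    · rw [wordProd_cons, mul_inv_rev, inv_simple]
      group
    · have hcond : (π γ * t * (π γ)⁻¹ = s i) ↔ (t = (π γ)⁻¹ * s i * π γ) := by
        constructor
        · intro h
          have : t = (π γ)⁻¹ * (π γ * t * (π γ)⁻¹) * π γ := by group
          rw [this, h]
        · intro h
          rw [h]; group
      rw [cs.brRightInvSeqCons, List.count_cons]
      simp only [beq_iff_eq]
      by_cases hc : t = (π γ)⁻¹ * s i * π γ
      · rw [if_pos (hcond.mpr hc), if_pos hc.symm]
        rcases Nat.even_or_odd ((ris γ).count t) with he | ho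
        · rw [if_pos he, if_neg (by simp [Nat.even_add_one, he])]
        · have hne : ¬ Even ((ris γ).count t) := Nat.not_even_iff_odd.mpr ho
          rw [if_neg hne, if_pos (by simpa [Nat.even_add_one] using hne), neg_neg]
      · have hne2 : ¬((π γ)⁻¹ * s i * π γ = t) := fun hh => hc hh.symm
        rw [if_neg (fun hh => hc (hcond.mp hh)), if_neg hne2, add_zero]

lemma brProdPr_alt (i i' : B) (k : ℕ) :
    ((alternatingWord i i' (2 * k)).map cs.brPr).prod = (cs.brPr i * cs.brPr i') ^ k := by
  induction k with
  | zero => simp [alternatingWord]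
  | succ k ih =>
    have h1 : 2 * (k + 1) = (2 * k + 1) + 1 := by ring
    rw [h1, alternatingWord_succ', alternatingWord_succ']
    rw [if_neg (by simp [Nat.even_add_one]), if_pos (even_two_mul k)]
    rw [map_cons, map_cons, prod_cons, prod_cons, ih, pow_succ']
    rw [mul_assoc]

lemma brSimpleConjPow (i i' : B) (j : ℕ) :
    s i' * (s i * s i') ^ j * s i' = ((s i * s i') ^ j)⁻¹ := by
  induction j with
  | zero => simp
  | succ j ih =>
    have key : s i' * (s i * s i') * s i' = (s i * s i')⁻¹ := by
      rw [mul_inv_rev, inv_simple, inv_simple, mul_assoc, mul_assoc,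
        cs.simple_mul_simple_self, mul_one]
    have expand : s i' * (s i * s i') ^ (j + 1) * s i'
        = (s i' * (s i * s i') ^ j * s i') * (s i' * (s i * s i') * s i') := by
      rw [pow_succ]
      simp [mul_assoc, cs.simple_mul_simple_cancel_left]
    rw [expand, ih, key, ← mul_inv_rev, ← pow_succ']

lemma brInvPowSimple (i i' : B) (j : ℕ) :
    ((s i * s i') ^ j)⁻¹ * s i' = s i' * (s i * s i') ^ j := by
  have h := cs.brSimpleConjPow i i' j
  have h2 := congrArg (· * s i') h
  rw [mul_assoc, cs.simple_mul_simple_self, mul_one] at h2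
  exact h2.symm

lemma brRisAltEntry (i i' : B) (n : ℕ) :
    (π (alternatingWord i i' n))⁻¹ * s (if Even n then i' else i) * π (alternatingWord i i' n)
      = s i' * (s i * s i') ^ n := by
  rcases Nat.even_or_odd n with he | ho
  · obtain ⟨k, hk⟩ := he
    rw [if_pos ⟨k, hk⟩, cs.prod_alternatingWord_eq_mul_pow, if_pos ⟨k, hk⟩, one_mul]
    have hn2 : n / 2 = k := by omega
    rw [hn2, cs.brInvPowSimple, mul_assoc, ← pow_add]
    congr 2
    omega
  · obtain ⟨k, hk⟩ := ho
    have hne : ¬ Even n := by rw [Nat.not_even_iff_odd]; exact ⟨k, hk⟩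
    rw [if_neg hne, cs.prod_alternatingWord_eq_mul_pow, if_neg hne]
    have hn2 : n / 2 = k := by omega
    rw [hn2]
    have e1 : (s i' * (s i * s i') ^ k)⁻¹ = ((s i * s i') ^ k)⁻¹ * s i' := by
      rw [mul_inv_rev, inv_simple]
    rw [e1, cs.brInvPowSimple i i' k]
    have e2 : (s i' * (s i * s i') ^ k) * s i * (s i' * (s i * s i') ^ k)
        = s i' * ((s i * s i') ^ k * ((s i * s i') * (s i * s i') ^ k)) := by
      simp only [mul_assoc]
    rw [e2, ← pow_succ', ← pow_add]
    have e3 : k + (k + 1) = n := by omega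
    rw [e3]

lemma brRisAlt (i i' : B) (N : ℕ) :
    ris (alternatingWord i i' N)
      = ((List.range N).map (fun n => s i' * (s i * s i') ^ n)).reverse := by
  induction N with
  | zero => simp [alternatingWord]
  | succ N ih =>
    rw [alternatingWord_succ', cs.brRightInvSeqCons, ih, cs.brRisAltEntry,
      List.range_succ, map_append, reverse_append]
    simp

lemma brEvenCountRisAlt (i i' : B) (t : W) :
    Even ((ris (alternatingWord i i' (2 * M i i'))).count t) := by
  rw [cs.brRisAlt, List.count_reverse]
  have hc : (s i * s i') ^ M i i' = 1 := cs.simple_mul_simple_pow i i'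
  rw [two_mul, List.range_add, map_append, List.count_append]
  have heq : List.map (fun n => s i' * (s i * s i') ^ n)
        ((List.range (M i i')).map (fun x => M i i' + x))
      = List.map (fun n => s i' * (s i * s i') ^ n) (List.range (M i i')) := by
    rw [List.map_map]
    apply List.map_congr_left
    intro x _
    simp only [Function.comp_apply]
    rw [pow_add, hc, one_mul]
  rw [heq]
  exact ⟨_, rfl⟩

lemma brPr_liftable : M.IsLiftable cs.brPr := by
  intro i i'
  apply Equiv.ext
  rintro ⟨t, ε⟩
  rw [← cs.brProdPr_alt, cs.brProdPr_apply]
  have hπ : π (alternatingWord i i' (2 * M i i')) = 1 := by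
    rw [cs.prod_alternatingWord_eq_mul_pow, if_pos (even_two_mul _), one_mul]
    have h2 : 2 * M i i' / 2 = M i i' := by omega
    rw [h2, cs.simple_mul_simple_pow]
  rw [hπ, if_pos (cs.brEvenCountRisAlt i i' t)]
  simp

noncomputable def brRep : W →* Equiv.Perm (W × ℤˣ) := cs.lift ⟨cs.brPr, cs.brPr_liftable⟩

lemma brRep_simple (i : B) : cs.brRep (s i) = cs.brPr i :=
  cs.lift_apply_simple cs.brPr_liftable i

lemma brRep_wordProd (γ : List B) : cs.brRep (π γ) = (γ.map cs.brPr).prod := by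
  rw [wordProd, map_list_prod, List.map_map]
  congr 1
  apply List.map_congr_left
  intro x _
  simp only [Function.comp_apply]
  exact cs.brRep_simple x

lemma brRep_apply (γ : List B) (t : W) (ε : ℤˣ) :
    cs.brRep (π γ) (t, ε) =
      (π γ * t * (π γ)⁻¹, if Even ((ris γ).count t) then ε else -ε) := by
  rw [cs.brRep_wordProd, cs.brProdPr_apply]

lemma brRep_reflection {t : W} (ht : cs.IsReflection t) (ε : ℤˣ) :
    cs.brRep t (t, ε) = (t, -ε) := by
  obtain ⟨v, k, rfl⟩ := ht
  obtain ⟨α, rfl⟩ := cs.wordProd_surjective v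
  induction α generalizing ε with
  | nil =>
    simp only [wordProd_nil, one_mul, inv_one, mul_one]
    rw [cs.brRep_simple, cs.brPr_apply]
    simp [cs.simple_mul_simple_self, one_mul]
  | cons m α ih =>
    have hts : π (m :: α) * s k * (π (m :: α))⁻¹
        = s m * (π α * s k * (π α)⁻¹) * s m := by
      rw [wordProd_cons, mul_inv_rev, inv_simple]
      group
    rw [hts]
    set t' := π α * s k * (π α)⁻¹ with ht'def
    have hmul : cs.brRep (s m * t' * s m)
        = cs.brRep (s m) * cs.brRep t' * cs.brRep (s m) := by
      rw [← map_mul, ← map_mul]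
    have step1 : cs.brRep (s m) (s m * t' * s m, ε) = (t', if t' = s m then -ε else ε) := by
      rw [cs.brRep_simple, cs.brPr_apply]
      show (s m * (s m * t' * s m) * s m, if (s m * t' * s m) = s m then -ε else ε)
          = (t', if t' = s m then -ε else ε)
      rw [cs.brConjCancel]
      by_cases h : t' = s m
      · rw [if_pos ((cs.brConjEqIff m t').mpr h), if_pos h]
      · rw [if_neg (fun hh => h ((cs.brConjEqIff m t').mp hh)), if_neg h]
    have step2 : cs.brRep t' (t', if t' = s m then -ε else ε)
        = (t', -(if t' = s m then -ε else ε)) := ih _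
    have step3 : cs.brRep (s m) (t', -(if t' = s m then -ε else ε)) = (s m * t' * s m, -ε) := by
      rw [cs.brRep_simple, cs.brPr_apply]
      show (s m * t' * s m, if t' = s m then -(-(if t' = s m then -ε else ε))
          else -(if t' = s m then -ε else ε)) = (s m * t' * s m, -ε)
      by_cases h : t' = s m
      · simp [h]
      · simp [h]
    calc cs.brRep (s m * t' * s m) (s m * t' * s m, ε)
        = cs.brRep (s m) (cs.brRep t' (cs.brRep (s m) (s m * t' * s m, ε))) := by
          rw [hmul, Equiv.Perm.mul_apply, Equiv.Perm.mul_apply]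
      _ = (s m * t' * s m, -ε) := by rw [step1, step2, step3]

/-! ### Strong exchange -/

theorem brMemRis {t : W} (ht : cs.IsReflection t) {ω : List B}
    (hl : ℓ (π ω * t) < ℓ (π ω)) : t ∈ ris ω := by
  by_contra hmem
  obtain ⟨ρ, hρred, hρprod⟩ := cs.exists_reduced_word' (π ω * t)
  have e1 : cs.brRep (π ω * t) (t, 1) = (π ω * t * (π ω)⁻¹, -1) := by
    rw [map_mul, Equiv.Perm.mul_apply, cs.brRep_reflection ht, cs.brRep_apply ω t (-1),
      List.count_eq_zero_of_not_mem hmem]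
    rw [if_pos Even.zero]
  have e2 : cs.brRep (π ω * t) (t, 1)
      = (π ρ * t * (π ρ)⁻¹, if Even ((ris ρ).count t) then 1 else -1) := by
    rw [hρprod, cs.brRep_apply]
  rw [e1] at e2
  have hsgn : (-1 : ℤˣ) = if Even ((ris ρ).count t) then 1 else -1 := congrArg Prod.snd e2
  have hodd : ¬ Even ((ris ρ).count t) := by
    intro h
    rw [if_pos h] at hsgn
    exact absurd hsgn (by decide)
  have hmem' : t ∈ ris ρ := by
    by_contra h
    rw [List.count_eq_zero_of_not_mem h] at hodd
    exact hodd Even.zero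
  have hinv := cs.isRightInversion_of_mem_rightInvSeq hρred hmem'
  have h2 : ℓ (π ρ * t) < ℓ (π ρ) := hinv.2
  rw [← hρprod, mul_assoc, ht.mul_self, mul_one] at h2
  omega

theorem brExchangeRight {t w : W} (ht : cs.IsReflection t) {ω : List B} (hπ : π ω = w)
    (hl : ℓ (w * t) < ℓ w) :
    ∃ ρ, ρ <+ ω ∧ ρ.length + 1 = ω.length ∧ π ρ = w * t := by
  subst hπ
  have hmem := cs.brMemRis ht hl
  obtain ⟨j, hj, hget⟩ := List.getElem_of_mem hmem
  have hj' : j < ω.length := by simpa using hj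
  refine ⟨ω.eraseIdx j, List.eraseIdx_sublist ω j, List.length_eraseIdx_add_one hj', ?_⟩
  have hh := cs.wordProd_mul_getD_rightInvSeq ω j
  rw [List.getD_eq_getElem _ _ hj, hget] at hh
  exact hh.symm

theorem brExchangeLeft {t w : W} (ht : cs.IsReflection t) {ω : List B} (hπ : π ω = w)
    (hl : ℓ (t * w) < ℓ w) :
    ∃ ρ, ρ <+ ω ∧ ρ.length + 1 = ω.length ∧ π ρ = t * w := by
  have hπ' : π ω.reverse = w⁻¹ := by rw [wordProd_reverse, hπ]
  have heq : w⁻¹ * t = (t * w)⁻¹ := by rw [mul_inv_rev, ht.inv]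
  have hl' : ℓ (w⁻¹ * t) < ℓ w⁻¹ := by
    rw [heq, cs.length_inv, cs.length_inv]
    exact hl
  obtain ⟨ρ', hsub, hlen, hprod⟩ := cs.brExchangeRight ht hπ' hl'
  refine ⟨ρ'.reverse, by simpa using hsub.reverse, by simpa using hlen, ?_⟩
  rw [wordProd_reverse, hprod, heq, inv_inv]

/-! ### Deletion -/

theorem brDeletion (γ : List B) :
    ∃ δ, δ <+ γ ∧ cs.IsReduced δ ∧ π δ = π γ := by
  induction γ with
  | nil => exact ⟨[], Sublist.refl _, by simp [IsReduced], rfl⟩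
  | cons i γ ih =>
    obtain ⟨δ₁, hsub, hred, hprod⟩ := ih
    rcases cs.length_simple_mul (π γ) i with hasc | hdesc
    · refine ⟨i :: δ₁, hsub.cons₂ i, ?_, by rw [wordProd_cons, wordProd_cons, hprod]⟩
      show ℓ (π (i :: δ₁)) = (i :: δ₁).length
      rw [wordProd_cons, hprod, hasc, List.length_cons]
      have h1 : ℓ (π δ₁) = δ₁.length := hred
      rw [hprod] at h1
      omega
    · have hlt : ℓ (s i * π δ₁) < ℓ (π δ₁) := by
        rw [hprod]
        omega
      obtain ⟨ρ, hρsub, hρlen, hρprod⟩ :=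
        cs.brExchangeLeft (cs.isReflection_simple i) rfl hlt
      refine ⟨ρ, ((hρsub.trans hsub).trans (List.sublist_cons_self i γ)), ?_, ?_⟩
      · show ℓ (π ρ) = ρ.length
        rw [hρprod, hprod]
        have h1 : ℓ (π δ₁) = δ₁.length := hred
        rw [hprod] at h1
        omega
      · rw [hρprod, hprod, wordProd_cons]

/-! ### The chain (Bruhat) order -/

def brStep (a b : W) : Prop := ∃ t, cs.IsReflection t ∧ b = a * t ∧ ℓ a < ℓ b

def brLE (a b : W) : Prop := Relation.ReflTransGen cs.brStep a b

lemma brStep_ascent {a : W} {i : B} (h : ℓ a < ℓ (s i * a)) : cs.brStep a (s i * a) :=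
  ⟨a⁻¹ * s i * a, ⟨a⁻¹, i, by rw [inv_inv]⟩, by group, h⟩

lemma brStep_descent {a : W} {i : B} (h : ℓ (s i * a) < ℓ a) : cs.brStep (s i * a) a :=
  ⟨a⁻¹ * s i * a, ⟨a⁻¹, i, by rw [inv_inv]⟩,
    by simp [mul_assoc, cs.simple_mul_simple_cancel_left], h⟩

/-- One-step lifting. -/
theorem brOSL {y c t : W} {i : B} (ht : cs.IsReflection t) (hyct : y = c * t)
    (hlc : ℓ c < ℓ y) (hsy : ℓ (s i * y) < ℓ y) : cs.brLE (s i * c) y := by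
  have hy2 : ℓ (s i * y) + 1 = ℓ y := by
    rcases cs.length_simple_mul y i with hh | hh <;> omega
  obtain ⟨β₂, hβred, hβprod⟩ := cs.exists_reduced_word' (s i * y)
  have hρprod : π (i :: β₂) = y := by
    rw [wordProd_cons, ← hβprod, cs.simple_mul_simple_cancel_left]
  have hβlen : ℓ (s i * y) = β₂.length := by
    rw [hβprod]; exact hβred
  have hyt : y * t = c := by rw [hyct, mul_assoc, ht.mul_self, mul_one]
  have hinv : ℓ (π (i :: β₂) * t) < ℓ (π (i :: β₂)) := by
    rw [hρprod, hyt]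
    exact hlc
  have hmem := cs.brMemRis ht hinv
  rw [cs.brRightInvSeqCons] at hmem
  rcases List.mem_cons.mp hmem with hhead | htail
  · have hteq : t = y⁻¹ * s i * y := by
      rw [hhead, ← hβprod]
      group
    have hscy : s i * c = y := by
      rw [← hyt, hteq]
      simp [mul_assoc, cs.simple_mul_simple_cancel_left]
    rw [hscy]
    exact Relation.ReflTransGen.refl
  · obtain ⟨j, hj, hget⟩ := List.getElem_of_mem htail
    have hj' : j < β₂.length := by simpa using hj
    have hc2 := cs.wordProd_mul_getD_rightInvSeq β₂ j
    rw [List.getD_eq_getElem _ _ hj, hget] at hc2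
    -- hc2 : π β₂ * t = π (β₂.eraseIdx j)
    have hsic : s i * c = π (β₂.eraseIdx j) := by
      rw [← hc2, ← hβprod, ← hyt]
      group
    have hlen2 : ℓ (π (β₂.eraseIdx j)) < ℓ (s i * y) := by
      have h1 := cs.length_wordProd_le (β₂.eraseIdx j)
      have h2 : (β₂.eraseIdx j).length + 1 = β₂.length := List.length_eraseIdx_add_one hj'
      omega
    have hstep1 : cs.brStep (π (β₂.eraseIdx j)) (s i * y) := by
      refine ⟨t, ht, ?_, hlen2⟩
      rw [← hc2, ← hβprod, mul_assoc, ht.mul_self, mul_one]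
    have hstep2 : cs.brStep (s i * y) y := by
      have := cs.brStep_ascent (a := s i * y) (i := i) (by rw [cs.simple_mul_simple_cancel_left]; omega)
      rwa [cs.simple_mul_simple_cancel_left] at this
    rw [hsic]
    exact (Relation.ReflTransGen.single hstep1).tail hstep2

/-- The lifting property for the chain order. -/
theorem brLift : ∀ n y, ℓ y ≤ n → ∀ x, cs.brLE x y → ∀ i,
    (ℓ y < ℓ (s i * y) → cs.brLE (s i * x) (s i * y)) ∧
    (ℓ (s i * y) < ℓ y → cs.brLE (s i * x) y) := by
  intro n
  induction n with
  | zero =>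
    intro y hy x hxy i
    rcases Relation.ReflTransGen.cases_tail hxy with rfl | ⟨c, _, _, _, _, hlc⟩
    · constructor
      · intro _
        exact Relation.ReflTransGen.refl
      · intro h
        omega
    · omega
  | succ n ih =>
    intro y hy x hxy i
    rcases Relation.ReflTransGen.cases_tail hxy with rfl | ⟨c, hxc, hcy⟩
    · constructor
      · intro _
        exact Relation.ReflTransGen.refl
      · intro h
        exact Relation.ReflTransGen.single (cs.brStep_descent h)
    · obtain ⟨t, ht, hyct, hlcy⟩ := hcy
      have hcn : ℓ c ≤ n := by omega
      have IHc := ih c hcn x hxc i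
      have hscne := cs.length_simple_mul_ne c i
      constructor
      · intro hasc
        by_cases hc : ℓ (s i * c) < ℓ c
        · have h1 : cs.brLE (s i * x) c := IHc.2 hc
          have hs1 : cs.brStep c y := ⟨t, ht, hyct, hlcy⟩
          have hs2 : cs.brStep y (s i * y) := cs.brStep_ascent hasc
          exact (h1.tail hs1).tail hs2
        · have hc' : ℓ c < ℓ (s i * c) := by omega
          have h1 : cs.brLE (s i * x) (s i * c) := IHc.1 hc'
          have hb : ℓ (s i * c) ≤ ℓ c + 1 := by
            rcases cs.length_simple_mul c i with hh | hh <;> omega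
          have hstep : cs.brStep (s i * c) (s i * y) :=
            ⟨t, ht, by rw [hyct, mul_assoc], by omega⟩
          exact h1.tail hstep
      · intro hdescy
        by_cases hc : ℓ (s i * c) < ℓ c
        · exact (IHc.2 hc).tail ⟨t, ht, hyct, hlcy⟩
        · have hc' : ℓ c < ℓ (s i * c) := by omega
          have h1 : cs.brLE (s i * x) (s i * c) := IHc.1 hc'
          have h2 : cs.brLE (s i * c) y := cs.brOSL ht hyct hlcy hdescy
          exact h1.trans h2

/-- Subword of a reduced word implies chain order. -/
theorem brSublist {ω' ω : List B} (hsub : ω' <+ ω) (hred : cs.IsReduced ω) :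
    cs.brLE (π ω') (π ω) := by
  induction hsub with
  | slnil => exact Relation.ReflTransGen.refl
  | @cons l₁ l₂ a h ih =>
    have hred' : cs.IsReduced l₂ := by
      have := hred.drop 1
      simpa using this
    have h1 := ih hred'
    have hstep : cs.brStep (π l₂) (π (a :: l₂)) := by
      rw [wordProd_cons]
      apply cs.brStep_ascent
      have h2 : ℓ (π (a :: l₂)) = (a :: l₂).length := hred
      rw [wordProd_cons, List.length_cons] at h2
      have h3 := cs.length_wordProd_le l₂
      omega
    exact h1.tail hstep
  | @cons_cons l₁ l₂ a h ih =>
    have hred' : cs.IsReduced l₂ := by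
      have := hred.drop 1
      simpa using this
    have h1 := ih hred'
    have hasc : ℓ (π l₂) < ℓ (s a * π l₂) := by
      have h2 : ℓ (π (a :: l₂)) = (a :: l₂).length := hred
      rw [wordProd_cons, List.length_cons] at h2
      have h3 := cs.length_wordProd_le l₂
      omega
    have := (cs.brLift (ℓ (π l₂)) (π l₂) le_rfl (π l₁) h1 a).1 hasc
    rw [wordProd_cons, wordProd_cons]
    exact this

/-- Chain order implies subword of every reduced word. -/
theorem brSubword : ∀ n w x, ℓ w ≤ n → cs.brLE x w → ∀ ω, cs.IsReduced ω → π ω = w →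
    ∃ δ, δ <+ ω ∧ cs.IsReduced δ ∧ π δ = x := by
  intro n
  induction n with
  | zero =>
    intro w x hw hxw ω hred hπ
    rcases Relation.ReflTransGen.cases_tail hxw with rfl | ⟨c, _, _, _, _, hlc⟩
    · exact ⟨ω, Sublist.refl _, hred, hπ⟩
    · omega
  | succ n ih =>
    intro w x hw hxw ω hred hπ
    rcases Relation.ReflTransGen.cases_tail hxw with rfl | ⟨c, hxc, hcw⟩
    · exact ⟨ω, Sublist.refl _, hred, hπ⟩
    · obtain ⟨t, ht, hwct, hlc⟩ := hcw
      have hwt : w * t = c := by rw [hwct, mul_assoc, ht.mul_self, mul_one]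
      have hlt : ℓ (w * t) < ℓ w := by rw [hwt]; exact hlc
      obtain ⟨ρ, hρsub, _, hρprod⟩ := cs.brExchangeRight ht hπ hlt
      obtain ⟨ρ', hρ'sub, hρ'red, hρ'prod⟩ := cs.brDeletion ρ
      have hc : ℓ c ≤ n := by omega
      obtain ⟨δ, hδsub, hδred, hδprod⟩ := ih c x hc hxc ρ' hρ'red (by rw [hρ'prod, hρprod, hwt])
      exact ⟨δ, (hδsub.trans hρ'sub).trans hρsub, hδred, hδprod⟩

/-- Cancellation for the chain order. -/
theorem brCancel : ∀ n u v w, ℓ u ≤ n →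
    ℓ (u * v) = ℓ u + ℓ v → ℓ (u * w) = ℓ u + ℓ w → cs.brLE (u * v) (u * w) → cs.brLE v w := by
  intro n
  induction n with
  | zero =>
    intro u v w hu hv hw h
    have hu1 : u = 1 := cs.length_eq_zero_iff.mp (Nat.le_zero.mp hu)
    rwa [hu1, one_mul, one_mul] at h
  | succ n ih =>
    intro u v w hu hv hw h
    by_cases hu1 : u = 1
    · rwa [hu1, one_mul, one_mul] at h
    · obtain ⟨i, hi⟩ := cs.exists_leftDescent_of_ne_one hu1
      have hi' : ℓ (s i * u) < ℓ u := hi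
      obtain ⟨u₁, hu₁def⟩ : ∃ x, x = s i * u := ⟨_, rfl⟩
      rw [← hu₁def] at hi'
      have huu : u = s i * u₁ := by rw [hu₁def, cs.simple_mul_simple_cancel_left]
      have hlu₁ : ℓ u₁ + 1 = ℓ u := by
        rcases cs.length_simple_mul u i with hh | hh <;> rw [← hu₁def] at hh <;> omega
      have hu₁n : ℓ u₁ ≤ n := by omega
      have hxv : ℓ (u₁ * v) = ℓ u₁ + ℓ v := by
        have h1 : u * v = s i * (u₁ * v) := by rw [huu, mul_assoc]
        have h2 : ℓ (s i * (u₁ * v)) ≤ ℓ (u₁ * v) + 1 := by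
          rcases cs.length_simple_mul (u₁ * v) i with hh | hh <;> omega
        have h3 := cs.length_mul_le u₁ v
        rw [h1] at hv
        omega
      have hxw : ℓ (u₁ * w) = ℓ u₁ + ℓ w := by
        have h1 : u * w = s i * (u₁ * w) := by rw [huu, mul_assoc]
        have h2 : ℓ (s i * (u₁ * w)) ≤ ℓ (u₁ * w) + 1 := by
          rcases cs.length_simple_mul (u₁ * w) i with hh | hh <;> omega
        have h3 := cs.length_mul_le u₁ w
        rw [h1] at hw
        omega
      have haxv : ℓ (s i * (u₁ * v)) = ℓ (u₁ * v) + 1 := by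
        have h1 : s i * (u₁ * v) = u * v := by rw [huu, mul_assoc]
        rw [h1, hv]
        omega
      have haxw : ℓ (s i * (u₁ * w)) = ℓ (u₁ * w) + 1 := by
        have h1 : s i * (u₁ * w) = u * w := by rw [huu, mul_assoc]
        rw [h1, hw]
        omega
      have h' : cs.brLE (s i * (u₁ * v)) (s i * (u₁ * w)) := by
        rw [show s i * (u₁ * v) = u * v from by rw [huu, mul_assoc],
          show s i * (u₁ * w) = u * w from by rw [huu, mul_assoc]]
        exact h
      have hdesc : ℓ (s i * (s i * (u₁ * w))) < ℓ (s i * (u₁ * w)) := by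
        rw [cs.simple_mul_simple_cancel_left]
        omega
      have step1 := (cs.brLift (ℓ (s i * (u₁ * w))) _ le_rfl _ h' i).2 hdesc
      rw [cs.simple_mul_simple_cancel_left] at step1
      obtain ⟨β, hβred, hβprod⟩ := cs.exists_reduced_word' (u₁ * w)
      have hβlen : ℓ (u₁ * w) = β.length := by rw [hβprod]; exact hβred
      have hiβred : cs.IsReduced (i :: β) := by
        show ℓ (π (i :: β)) = (i :: β).length
        rw [wordProd_cons, ← hβprod, haxw, List.length_cons]
        omega
      have hπiβ : π (i :: β) = s i * (u₁ * w) := by rw [wordProd_cons, ← hβprod]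
      obtain ⟨δ, hδsub, hδred, hδprod⟩ :=
        cs.brSubword (ℓ (s i * (u₁ * w))) _ _ le_rfl step1 (i :: β) hiβred hπiβ
      have hxy : cs.brLE (u₁ * v) (u₁ * w) := by
        cases hδsub with
        | cons _ h2 =>
          have h3 := cs.brSublist h2 hβred
          rwa [hδprod, ← hβprod] at h3
        | cons_cons _ h2 =>
          exfalso
          rename_i δ₁
          have hp : s i * π δ₁ = u₁ * v := by rw [← wordProd_cons]; exact hδprod
          have hp1 : π δ₁ = s i * (u₁ * v) := by
            rw [← hp, cs.simple_mul_simple_cancel_left]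
          have hle := cs.length_wordProd_le δ₁
          have hred' : ℓ (π (i :: δ₁)) = δ₁.length + 1 := by
            have h4 : ℓ (π (i :: δ₁)) = (i :: δ₁).length := hδred
            simpa using h4
          have e1 : ℓ (u₁ * v) = δ₁.length + 1 := by rw [← hδprod]; exact hred'
          have e2 : ℓ (π δ₁) = ℓ (u₁ * v) + 1 := by rw [hp1, haxv]
          omega
      exact ih u₁ v w hu₁n hxv hxw hxy

end CoxeterSystem

/-- The Bruhat order on a Coxeter group: `u ≤ w` iff some reduced word for `w`
has a subword whose product is `u`. -/
def CoxeterSystem.bruhatLE {B W : Type*} [Group W] {M : CoxeterMatrix B}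
    (cs : CoxeterSystem M W) (u w : W) : Prop :=
  ∃ ω : List B, cs.IsReduced ω ∧ cs.wordProd ω = w ∧
    ∃ ω' : List B, ω'.Sublist ω ∧ cs.wordProd ω' = u

/-- If `l(uv) = l(u) + l(v)` and `l(uw) = l(u) + l(w)`, then `uv ≤ uw` in the Bruhat
order if and only if `v ≤ w`. -/
theorem bruhat_cancellation {B W : Type*} [Group W] {M : CoxeterMatrix B}
    (cs : CoxeterSystem M W) (u v w : W)
    (hv : cs.length (u * v) = cs.length u + cs.length v)
    (hw : cs.length (u * w) = cs.length u + cs.length w) :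
    cs.bruhatLE (u * v) (u * w) ↔ cs.bruhatLE v w := by
  constructor
  · rintro ⟨ω, hred, hπ, ω', hsub, hπ'⟩
    have h1 := cs.brSublist hsub hred
    rw [hπ, hπ'] at h1
    have h2 := cs.brCancel (cs.length u) u v w le_rfl hv hw h1
    obtain ⟨ρ, hρred, hρprod⟩ := cs.exists_reduced_word' w
    obtain ⟨δ, hδsub, hδred, hδprod⟩ :=
      cs.brSubword (cs.length w) w v le_rfl h2 ρ hρred hρprod.symm
    exact ⟨ρ, hρred, hρprod.symm, δ, hδsub, hδprod⟩
  · rintro ⟨ω, hred, hπ, ω', hsub, hπ'⟩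
    obtain ⟨α, hαred, hαprod⟩ := cs.exists_reduced_word' u
    have e1 : cs.length u = α.length := by rw [hαprod]; exact hαred
    have e2 : cs.length w = ω.length := by rw [← hπ]; exact hred
    refine ⟨α ++ ω, ?_, ?_, α ++ ω', (List.Sublist.refl α).append hsub, ?_⟩
    · show cs.length (cs.wordProd (α ++ ω)) = (α ++ ω).length
      rw [cs.wordProd_append, ← hαprod, hπ, hw, List.length_append]
      omega
    · rw [cs.wordProd_append, ← hαprod, hπ]
    · rw [cs.wordProd_append, ← hαprod, hπ']
end

section
/- Let (W,S) be a Coxeter system and J, K ⊆ S. Then D_J is the disjoint union over d ∈ D_{K,J} of the sets D^K_{K ∩ dJd⁻¹} · d, where D_{K,J} = D_K⁻¹ ∩ D_J is the set of minimal length (W_K, W_J) double coset representatives, and D^K_L = W_K ∩ D_L. -/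
namespace CoxAux

open CoxeterSystem List

variable {B W : Type*} [Group W] {M : CoxeterMatrix B} (cs : CoxeterSystem M W)

local prefix:100 "s" => cs.simple
local prefix:100 "π" => cs.wordProd
local prefix:100 "ℓ" => cs.length
local prefix:100 "ris" => cs.rightInvSeq
local prefix:100 "lis" => cs.leftInvSeq

noncomputable local instance : DecidableEq W := Classical.decEq W

theorem zmod2_cases (x : ZMod 2) (h : x ≠ 0) : x = 1 := by revert h; revert x; decide

/-- The permutation of `W × ZMod 2` associated to a simple reflection. -/
noncomputable def eta (i : B) : Equiv.Perm (W × ZMod 2) :=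
  Function.Involutive.toPerm
    (fun x => (s i * x.1 * s i, x.2 + if x.1 = s i then 1 else 0))
    (by
      rintro ⟨t, e⟩
      have key : ∀ u : W, s i * (s i * u * s i) * s i = u := fun u => by
        have h1 : s i * (s i * u * s i) * s i = (s i * s i) * u * (s i * s i) := by
          simp only [mul_assoc]
        rw [h1, cs.simple_mul_simple_self, one_mul, mul_one]
      simp only [Prod.mk.injEq]
      refine ⟨key t, ?_⟩
      by_cases h : t = s i
      · subst h
        rw [if_pos rfl, if_pos (by rw [cs.simple_mul_simple_self, one_mul])]
        rw [add_assoc, (by decide : (1 : ZMod 2) + 1 = 0), add_zero]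
      · have h2 : ¬ (s i * t * s i = s i) := fun hc => h (by
          have := congrArg (fun y => s i * y * s i) hc
          simpa [key t, key (s i)] using this)
        simp [h, h2])

@[simp] theorem eta_apply (i : B) (x : W × ZMod 2) :
    eta cs i x = (s i * x.1 * s i, x.2 + if x.1 = s i then 1 else 0) := rfl

theorem prod_eta_apply (ω : List B) (x : W × ZMod 2) :
    (List.map (eta cs) ω).prod x =
      (π ω * x.1 * (π ω)⁻¹, x.2 + (List.count x.1 (ris ω) : ZMod 2)) := by
  induction ω generalizing x with
  | nil => simp [rightInvSeq]
  | cons i ω ih =>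
    rw [map_cons, prod_cons, Equiv.Perm.mul_apply, ih, eta_apply]
    have hd : cs.rightInvSeq (i :: ω) = ((π ω)⁻¹ * s i * π ω) :: cs.rightInvSeq ω := rfl
    have h1 : s i * (π ω * x.1 * (π ω)⁻¹) * s i = π (i :: ω) * x.1 * (π (i :: ω))⁻¹ := by
      rw [cs.wordProd_cons, mul_inv_rev, cs.inv_simple]
      group
    have h2 : (π ω * x.1 * (π ω)⁻¹ = s i) ↔ ((π ω)⁻¹ * s i * π ω = x.1) := by
      constructor
      · intro h; rw [← h]; group
      · intro h; rw [← h]; group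
    rw [hd, Prod.mk.injEq]
    refine ⟨h1, ?_⟩
    rw [List.count_cons]
    by_cases h : (π ω)⁻¹ * s i * π ω = x.1
    · rw [if_pos (h2.mpr h), if_pos (by simpa using h)]
      push_cast
      ring
    · rw [if_neg (fun hc => h (h2.mp hc)), if_neg (by simpa using h)]
      simp

/-- The word `[i, j, i, j, ...]` of length `2 * m`. -/
def rho (i j : B) : ℕ → List B
  | 0 => []
  | m + 1 => i :: j :: rho i j m

theorem prod_map_eta_rho (i j : B) (m : ℕ) :
    (eta cs i * eta cs j) ^ m = (List.map (eta cs) (rho i j m)).prod := by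
  induction m with
  | zero => simp [rho]
  | succ m ih => rw [pow_succ', rho, map_cons, map_cons, prod_cons, prod_cons, ih, mul_assoc]

theorem wordProd_rho (i j : B) (m : ℕ) :
    π (rho i j m) = (s i * s j) ^ m := by
  induction m with
  | zero => simp [rho]
  | succ m ih =>
    rw [rho, cs.wordProd_cons, cs.wordProd_cons, ih, pow_succ', mul_assoc]

theorem simple_mul_pow (i j : B) (m : ℕ) :
    s j * (s i * s j) ^ m = (s j * s i) ^ m * s j := by
  induction m with
  | zero => simp
  | succ m ih =>
    rw [pow_succ']
    calc s j * ((s i * s j) * (s i * s j) ^ m)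
        = (s j * s i) * (s j * (s i * s j) ^ m) := by simp only [mul_assoc]
      _ = (s j * s i) * ((s j * s i) ^ m * s j) := by rw [ih]
      _ = (s j * s i) ^ (m + 1) * s j := by rw [pow_succ']; simp only [mul_assoc]

theorem inv_pow_simple (i j : B) (m : ℕ) :
    ((s i * s j) ^ m)⁻¹ = (s j * s i) ^ m := by
  rw [← inv_pow, mul_inv_rev, cs.inv_simple, cs.inv_simple]

theorem ris_rho (i j : B) (m : ℕ) :
    cs.rightInvSeq (rho i j m) =
      ((List.range (2 * m)).reverse).map (fun k => (s j * s i) ^ k * s j) := by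
  induction m with
  | zero => simp [rho]
  | succ m ih =>
    have hd : cs.rightInvSeq (rho i j (m + 1)) =
        ((π (j :: rho i j m))⁻¹ * s i * π (j :: rho i j m)) ::
        (((π (rho i j m))⁻¹ * s j * π (rho i j m)) :: cs.rightInvSeq (rho i j m)) := rfl
    have hp : π (rho i j m) = (s i * s j) ^ m := wordProd_rho cs i j m
    have e2 : (π (rho i j m))⁻¹ * s j * π (rho i j m) = (s j * s i) ^ (2 * m) * s j := by
      rw [hp, inv_pow_simple, mul_assoc, simple_mul_pow, two_mul, pow_add, mul_assoc]
    have e1 : (π (j :: rho i j m))⁻¹ * s i * π (j :: rho i j m) =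
        (s j * s i) ^ (2 * m + 1) * s j := by
      rw [cs.wordProd_cons, hp, mul_inv_rev, inv_pow_simple, cs.inv_simple, simple_mul_pow]
      calc (s j * s i) ^ m * s j * s i * ((s j * s i) ^ m * s j)
          = ((s j * s i) ^ m * (s j * s i) * (s j * s i) ^ m) * s j := by
              simp only [mul_assoc]
        _ = ((s j * s i) ^ (m + 1) * (s j * s i) ^ m) * s j := by rw [pow_succ]
        _ = (s j * s i) ^ (2 * m + 1) * s j := by
              rw [← pow_add]
              have : m + 1 + m = 2 * m + 1 := by omega
              rw [this]
    have hr : (List.range (2 * (m + 1))).reverse =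
        (2 * m + 1) :: (2 * m) :: (List.range (2 * m)).reverse := by
      have h2 : 2 * (m + 1) = (2 * m + 1) + 1 := by ring
      rw [h2, List.range_succ, List.range_succ]
      simp
    rw [hd, e1, e2, ih, hr, map_cons, map_cons]

theorem even_count_ris_rho (i j : B) (t : W) :
    Even (List.count t (cs.rightInvSeq (rho i j (M i j)))) := by
  rw [ris_rho]
  rw [List.map_reverse, List.count_reverse]
  have h1 : 2 * M.M i j = M.M i j + M.M i j := by ring
  rw [h1, List.range_add, List.map_append, List.map_map, List.count_append]
  have h2 : (fun k => (s j * s i) ^ k * s j) ∘ (fun x => M.M i j + x) =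
      (fun k => (s j * s i) ^ k * s j) := by
    funext k
    simp only [Function.comp_apply]
    rw [pow_add, cs.simple_mul_simple_pow', one_mul]
  rw [h2]
  exact ⟨_, rfl⟩


theorem eta_liftable : M.IsLiftable (eta cs) := by
  intro i j
  apply Equiv.ext
  intro x
  rw [prod_map_eta_rho cs i j (M.M i j), prod_eta_apply]
  rw [wordProd_rho, cs.simple_mul_simple_pow]
  have h0 : ((List.count x.1 (cs.rightInvSeq (rho i j (M.M i j))) : ℕ) : ZMod 2) = 0 := by
    obtain ⟨c, hc⟩ := even_count_ris_rho cs i j x.1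
    rw [hc]
    push_cast
    have h2 : ((c : ZMod 2) + c) = 2 * c := by ring
    rw [h2, (by decide : (2 : ZMod 2) = 0), zero_mul]
  rw [h0, add_zero]
  simp

/-- The homomorphism `W →* Perm (W × ZMod 2)` encoding inversion parity. -/
noncomputable def phi : W →* Equiv.Perm (W × ZMod 2) := cs.lift ⟨eta cs, eta_liftable cs⟩

theorem phi_simple (i : B) : phi cs (s i) = eta cs i := cs.lift_apply_simple (eta_liftable cs) i

theorem phi_wordProd (ω : List B) : phi cs (π ω) = (List.map (eta cs) ω).prod := by
  unfold CoxeterSystem.wordProd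
  rw [MonoidHom.map_list_prod, List.map_map]
  exact congrArg List.prod (List.map_congr_left (fun i _ => by simp [phi_simple]))

/-- The parity of the number of occurrences of `t` in the right inversion sequence of
any word for `w`. -/
noncomputable def cc (w t : W) : ZMod 2 := (phi cs w (t, 0)).2

theorem cc_wordProd (ω : List B) (t : W) :
    cc cs (π ω) t = (List.count t (cs.rightInvSeq ω) : ZMod 2) := by
  unfold cc
  rw [phi_wordProd, prod_eta_apply]
  simp

theorem phi_apply (w : W) (x : W × ZMod 2) :
    phi cs w x = (w * x.1 * w⁻¹, x.2 + cc cs w x.1) := by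
  obtain ⟨ω, rfl⟩ := cs.wordProd_surjective w
  rw [phi_wordProd, prod_eta_apply, cc_wordProd]

theorem cc_mul (a b t : W) :
    cc cs (a * b) t = cc cs b t + cc cs a (b * t * b⁻¹) := by
  have h : phi cs (a * b) (t, 0) = phi cs a (phi cs b (t, 0)) := by
    rw [map_mul]; rfl
  unfold cc
  rw [h, phi_apply cs b, phi_apply cs a]
  simp [cc]

theorem cc_simple_self (i : B) : cc cs (s i) (s i) = 1 := by
  have h : s i = π [i] := by simp
  rw [h, cc_wordProd]
  have : cs.rightInvSeq [i] = [s i] := by simp [CoxeterSystem.rightInvSeq]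
  rw [this]
  simp

theorem mem_ris_of_cc_eq_one {ω : List B} {t : W} (h : cc cs (π ω) t = 1) :
    t ∈ cs.rightInvSeq ω := by
  by_contra hmem
  rw [cc_wordProd, List.count_eq_zero.mpr hmem] at h
  simp at h

theorem cc_eq_one_of_descent {w : W} {i : B} (h : ℓ (w * s i) < ℓ w) :
    cc cs w (s i) = 1 := by
  have h1 : cc cs w (s i) = 1 + cc cs (w * s i) (s i) := by
    have h2 := cc_mul cs (w * s i) (s i) (s i)
    rw [cs.simple_mul_simple_cancel_right] at h2
    rw [h2, cc_simple_self]
    congr 1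
    rw [cs.inv_simple, cs.simple_mul_simple_cancel_right]
  have h3 : cc cs (w * s i) (s i) = 0 := by
    by_contra hc
    have hc1 := zmod2_cases _ hc
    obtain ⟨ω', hred, heq⟩ := cs.exists_reduced_word' (w * s i)
    rw [heq] at hc1
    have hmem := mem_ris_of_cc_eq_one cs hc1
    obtain ⟨j, hj, hget⟩ := List.mem_iff_getElem.mp hmem
    rw [cs.length_rightInvSeq] at hj
    have hgd : (cs.rightInvSeq ω').getD j 1 = s i := by
      rw [List.getD_eq_getElem _ _ (by rw [cs.length_rightInvSeq]; exact hj)]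
      exact hget
    have hkey := cs.wordProd_mul_getD_rightInvSeq ω' j
    rw [hgd, ← heq, cs.simple_mul_simple_cancel_right] at hkey
    have hlen : ℓ w ≤ (ω'.eraseIdx j).length := by
      rw [hkey]; exact cs.length_wordProd_le _
    have hle : (ω'.eraseIdx j).length + 1 = ω'.length := List.length_eraseIdx_add_one hj
    have hl2 : ω'.length = ℓ (w * s i) := by rw [heq]; exact hred.symm
    omega
  rw [h1, h3, add_zero]

/-- The (right) exchange property. -/
theorem exchange_right {ω : List B} {i : B} (h : ℓ (π ω * s i) < ℓ (π ω)) :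
    ∃ j < ω.length, π ω * s i = π (ω.eraseIdx j) := by
  have h1 := cc_eq_one_of_descent cs h
  have hmem := mem_ris_of_cc_eq_one cs h1
  obtain ⟨j, hj, hget⟩ := List.mem_iff_getElem.mp hmem
  rw [cs.length_rightInvSeq] at hj
  refine ⟨j, hj, ?_⟩
  have hgd : (cs.rightInvSeq ω).getD j 1 = s i := by
    rw [List.getD_eq_getElem _ _ (by rw [cs.length_rightInvSeq]; exact hj)]
    exact hget
  rw [← hgd]
  exact cs.wordProd_mul_getD_rightInvSeq ω j

/-- The (left) exchange property. -/
theorem exchange_left {ω : List B} {i : B} (h : ℓ (s i * π ω) < ℓ (π ω)) :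
    ∃ j < ω.length, s i * π ω = π (ω.eraseIdx j) := by
  have h' : ℓ (π ω.reverse * s i) < ℓ (π ω.reverse) := by
    rw [cs.wordProd_reverse]
    have e1 : (π ω)⁻¹ * s i = (s i * π ω)⁻¹ := by
      rw [mul_inv_rev, cs.inv_simple]
    rw [e1, cs.length_inv, cs.length_inv]
    exact h
  have h1 := cc_eq_one_of_descent cs h'
  have hmem := mem_ris_of_cc_eq_one cs h1
  rw [cs.rightInvSeq_reverse, List.mem_reverse] at hmem
  obtain ⟨j, hj, hget⟩ := List.mem_iff_getElem.mp hmem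
  rw [cs.length_leftInvSeq] at hj
  refine ⟨j, hj, ?_⟩
  have hgd : (cs.leftInvSeq ω).getD j 1 = s i := by
    rw [List.getD_eq_getElem _ _ (by rw [cs.length_leftInvSeq]; exact hj)]
    exact hget
  rw [← hgd]
  exact cs.getD_leftInvSeq_mul_wordProd ω j

/-! ### Parabolic subgroup machinery -/

variable {K : Set B}

theorem wordProd_mem_closure {ω : List B} (h : ∀ b ∈ ω, b ∈ K) :
    π ω ∈ Subgroup.closure (cs.simple '' K) := by
  induction ω with
  | nil => simp [Subgroup.one_mem]
  | cons i ω ih =>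
    rw [cs.wordProd_cons]
    exact mul_mem (Subgroup.subset_closure ⟨i, h i (List.mem_cons_self), rfl⟩)
      (ih (fun b hb => h b (List.mem_cons_of_mem i hb)))

theorem exists_word_of_mem_closure {u : W} (h : u ∈ Subgroup.closure (cs.simple '' K)) :
    ∃ ω : List B, (∀ b ∈ ω, b ∈ K) ∧ u = π ω := by
  induction h using Subgroup.closure_induction with
  | mem x hx =>
    obtain ⟨i, hi, rfl⟩ := hx
    exact ⟨[i], by simpa using hi, by simp⟩
  | one => exact ⟨[], by simp, by simp⟩
  | mul x y hx hy ihx ihy =>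
    obtain ⟨ω₁, h₁, rfl⟩ := ihx
    obtain ⟨ω₂, h₂, rfl⟩ := ihy
    exact ⟨ω₁ ++ ω₂, by
      intro b hb
      rcases List.mem_append.mp hb with h | h
      · exact h₁ b h
      · exact h₂ b h, by rw [cs.wordProd_append]⟩
  | inv x hx ihx =>
    obtain ⟨ω, h₁, rfl⟩ := ihx
    exact ⟨ω.reverse, fun b hb => h₁ b (List.mem_reverse.mp hb), by rw [cs.wordProd_reverse]⟩

/-- Deletion property: every word contains a reduced word for the same element. -/
theorem exists_reduced_word_subset (ω : List B) :
    ∃ ω' : List B, cs.IsReduced ω' ∧ π ω' = π ω ∧ ∀ b ∈ ω', b ∈ ω := by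
  generalize hn : ω.length = n
  induction n using Nat.strong_induction_on generalizing ω with
  | _ n ih =>
  subst hn
  by_cases hred : cs.IsReduced ω
  · exact ⟨ω, hred, rfl, fun b hb => hb⟩
  · have hex : ∃ k, ¬ cs.IsReduced (ω.take (k + 1)) := by
      cases hω : ω.length with
      | zero =>
        exfalso
        apply hred
        rw [List.length_eq_zero_iff.mp hω]
        simp [CoxeterSystem.IsReduced]
      | succ len =>
        exact ⟨len, by rwa [(by omega : len + 1 = ω.length), List.take_length]⟩
    classical
    obtain ⟨k, hk, hmin⟩ : ∃ k, (¬ cs.IsReduced (ω.take (k + 1))) ∧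
        ∀ m, m < k → cs.IsReduced (ω.take (m + 1)) :=
      ⟨Nat.find hex, Nat.find_spec hex, fun m hm => not_not.mp (Nat.find_min hex hm)⟩
    have hkred : cs.IsReduced (ω.take k) := by
      cases k with
      | zero => simp [CoxeterSystem.IsReduced]
      | succ k' => exact hmin k' (by omega)
    have hklt : k < ω.length := by
      by_contra hge
      push_neg at hge
      apply hk
      rw [List.take_of_length_le (by omega), ← List.take_of_length_le hge]
      exact hkred
    have htake : ω.take (k + 1) = ω.take k ++ [ω[k]] := by
      rw [List.take_succ, List.getElem?_eq_getElem hklt]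
      rfl
    have hlen_take : (ω.take k).length = k := by
      rw [List.length_take]; omega
    have hlred : ℓ (π (ω.take k)) = k := by rw [hkred, hlen_take]
    have hmul : π (ω.take (k + 1)) = π (ω.take k) * s (ω[k]) := by
      rw [htake, cs.wordProd_append]
      simp
    have hdesc : ℓ (π (ω.take k) * s (ω[k])) < ℓ (π (ω.take k)) := by
      rcases cs.length_mul_simple (π (ω.take k)) ω[k] with h | h
      · exfalso
        apply hk
        show ℓ (π (ω.take (k+1))) = (ω.take (k+1)).length
        rw [hmul, h, List.length_take, hlred]
        omega
      · omega
    obtain ⟨l, hl, hdel⟩ := exchange_right cs hdesc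
    set ω₂ : List B := (ω.take k).eraseIdx l ++ ω.drop (k + 1) with hω₂
    have hπ₂ : π ω₂ = π ω := by
      rw [hω₂, cs.wordProd_append, ← hdel, ← hmul, ← cs.wordProd_append,
        List.take_append_drop]
    have hlen₂ : ω₂.length < ω.length := by
      rw [hω₂, List.length_append]
      have h1 : ((ω.take k).eraseIdx l).length + 1 = (ω.take k).length :=
        List.length_eraseIdx_add_one hl
      have h2 : (ω.drop (k + 1)).length = ω.length - (k + 1) := List.length_drop
      omega
    obtain ⟨ω', hred', hπ', hsub'⟩ := ih ω₂.length hlen₂ ω₂ rfl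
    refine ⟨ω', hred', by rw [hπ', hπ₂], fun b hb => ?_⟩
    rcases List.mem_append.mp (hsub' b hb) with h | h
    · exact List.take_subset k ω (List.eraseIdx_subset h)
    · exact List.drop_subset _ ω h

theorem exists_reduced_K_word {u : W} (h : u ∈ Subgroup.closure (cs.simple '' K)) :
    ∃ ω : List B, cs.IsReduced ω ∧ (∀ b ∈ ω, b ∈ K) ∧ u = π ω := by
  obtain ⟨ω, hωK, rfl⟩ := exists_word_of_mem_closure cs h
  obtain ⟨ω', hred, hπ, hsub⟩ := exists_reduced_word_subset cs ω
  exact ⟨ω', hred, fun b hb => hωK b (hsub b hb), hπ.symm⟩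

theorem exists_simple_mul {u : W} (hu : u ∈ Subgroup.closure (cs.simple '' K)) (hne : u ≠ 1) :
    ∃ (k : B) (u' : W), k ∈ K ∧ u' ∈ Subgroup.closure (cs.simple '' K) ∧
      u = s k * u' ∧ ℓ u' + 1 = ℓ u := by
  obtain ⟨ω, hred, hωK, rfl⟩ := exists_reduced_K_word cs hu
  cases hω : ω with
  | nil => exact absurd (by rw [hω]; simp) hne
  | cons i rest =>
    subst hω
    have hrest : cs.IsReduced rest := by
      have := CoxeterSystem.IsReduced.drop (j := 1) hred
      simpa using this
    refine ⟨i, π rest, hωK i (List.mem_cons_self), 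
      wordProd_mem_closure cs (fun b hb => hωK b (List.mem_cons_of_mem i hb)),
      by rw [cs.wordProd_cons], ?_⟩
    rw [hrest, hred]
    simp

/-- Existence of the parabolic coset decomposition. -/
theorem exists_decomp (K : Set B) (w : W) :
    ∃ u d : W, u ∈ Subgroup.closure (cs.simple '' K) ∧
      (∀ i ∈ K, ℓ d < ℓ (s i * d)) ∧ w = u * d ∧ ℓ w = ℓ u + ℓ d := by
  generalize hn : ℓ w = n
  induction n using Nat.strong_induction_on generalizing w with
  | _ n ih =>
  subst hn
  by_cases hw : ∀ i ∈ K, ℓ w < ℓ (s i * w)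
  · exact ⟨1, w, Subgroup.one_mem _, hw, (one_mul w).symm, by simp⟩
  · push_neg at hw
    obtain ⟨i, hiK, hle⟩ := hw
    have hlt : ℓ (s i * w) < ℓ w := lt_of_le_of_ne hle (cs.length_simple_mul_ne w i)
    have hstep : ℓ (s i * w) + 1 = ℓ w := by
      rcases cs.length_simple_mul w i with h | h
      · omega
      · omega
    obtain ⟨u', d, hu', hd, heq, hlen⟩ := ih (ℓ (s i * w)) (by omega) (s i * w) rfl
    refine ⟨s i * u', d, mul_mem (Subgroup.subset_closure ⟨i, hiK, rfl⟩) hu', hd, ?_, ?_⟩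
    · rw [mul_assoc, ← heq, ← mul_assoc, cs.simple_mul_simple_self, one_mul]
    · have h1 : ℓ w ≤ ℓ (s i * u') + ℓ d := by
        calc ℓ w = ℓ (s i * u' * d) := by
              rw [mul_assoc, ← heq, ← mul_assoc, cs.simple_mul_simple_self, one_mul]
          _ ≤ ℓ (s i * u') + ℓ d := cs.length_mul_le _ _
      have h2 : ℓ (s i * u') ≤ ℓ u' + 1 := by
        have := cs.length_mul_le (s i) u'
        rwa [cs.length_simple, add_comm 1] at this
      omega

/-- Length additivity for the parabolic decomposition. -/
theorem length_mul_of_min (K : Set B) : ∀ (n : ℕ), ∀ d : W, (∀ i ∈ K, ℓ d < ℓ (s i * d)) →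
    ℓ d = n → ∀ (m : ℕ), ∀ u : W, u ∈ Subgroup.closure (cs.simple '' K) → ℓ u = m →
    ℓ (u * d) = ℓ u + ℓ d := by
  intro n
  induction n using Nat.strong_induction_on with
  | _ n ihn =>
  intro d hd hdn m
  induction m using Nat.strong_induction_on with
  | _ m ihm =>
  intro u hu hum
  rcases eq_or_ne u 1 with rfl | hne
  · simp
  obtain ⟨k, u', hkK, hu', rfl, hlen⟩ := exists_simple_mul cs hu hne
  have h1 : ℓ (u' * d) = ℓ u' + ℓ d := ihm (ℓ u') (by omega) u' hu' rfl
  have hkey : ¬ ℓ (s k * (u' * d)) < ℓ (u' * d) := by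
    intro hcase
    obtain ⟨τ, hτred, hτK, hτ⟩ := exists_reduced_K_word cs hu'
    obtain ⟨δ, hδred, hδ⟩ := cs.exists_reduced_word' d
    have hτδ : π (τ ++ δ) = u' * d := by rw [cs.wordProd_append, ← hτ, ← hδ]
    have hτδlen : (τ ++ δ).length = ℓ u' + ℓ d := by
      rw [List.length_append, ← hτred, ← hδred, ← hτ, ← hδ]
    rw [← hτδ] at hcase
    obtain ⟨l, hl, hdel⟩ := exchange_left cs hcase
    rw [hτδ] at hdel
    rcases lt_or_ge l τ.length with hlτ | hlτ
    · rw [List.eraseIdx_append_of_lt_length hlτ, cs.wordProd_append, ← hδ] at hdel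
      have hcan : s k * u' = π (τ.eraseIdx l) := by
        apply mul_right_cancel (b := d)
        rw [mul_assoc]
        exact hdel
      have hlb : ℓ (s k * u') ≤ (τ.eraseIdx l).length := by
        rw [hcan]; exact cs.length_wordProd_le _
      have hlc : (τ.eraseIdx l).length + 1 = τ.length := List.length_eraseIdx_add_one hlτ
      have hτlen : τ.length = ℓ u' := by rw [← hτred, ← hτ]
      omega
    · rw [List.eraseIdx_append_of_length_le hlτ, cs.wordProd_append, ← hτ] at hdel
      set d₂ := π (δ.eraseIdx (l - τ.length)) with hd₂
      have hd₂len : ℓ d₂ < ℓ d := by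
        have h2 : (δ.eraseIdx (l - τ.length)).length + 1 = δ.length := by
          apply List.length_eraseIdx_add_one
          rw [List.length_append] at hl
          omega
        have h3 : ℓ d₂ ≤ (δ.eraseIdx (l - τ.length)).length := cs.length_wordProd_le _
        have h4 : δ.length = ℓ d := by rw [← hδred, ← hδ]
        omega
      have heq2 : u'⁻¹ * s k * u' * d = d₂ := by
        calc u'⁻¹ * s k * u' * d = u'⁻¹ * (s k * (u' * d)) := by simp only [mul_assoc]
          _ = u'⁻¹ * (u' * d₂) := by rw [hdel]
          _ = d₂ := by group
      obtain ⟨u₁, d₁, hu₁, hd₁, heq₃, hlen₃⟩ := exists_decomp cs K d₂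
      have hd₁lt : ℓ d₁ < n := by omega
      have hvd : d = (u'⁻¹ * s k * u' * u₁) * d₁ := by
        have h5 : d = (u'⁻¹ * s k * u')⁻¹ * d₂ := by
          rw [← heq2]; group
        have h6 : (u'⁻¹ * s k * u')⁻¹ = u'⁻¹ * s k * u' := by
          rw [mul_inv_rev, mul_inv_rev, cs.inv_simple, inv_inv]
          group
        rw [h5, h6, heq₃, ← mul_assoc]
      set v := u'⁻¹ * s k * u' * u₁ with hv
      have hvmem : v ∈ Subgroup.closure (cs.simple '' K) :=
        mul_mem (mul_mem (mul_mem (inv_mem hu') (Subgroup.subset_closure ⟨k, hkK, rfl⟩)) hu') hu₁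
      have hvlen : ℓ d = ℓ v + ℓ d₁ := by
        rw [hvd]
        exact ihn (ℓ d₁) hd₁lt d₁ hd₁ rfl (ℓ v) v hvmem rfl
      have hvne : v ≠ 1 := by
        intro hc
        rw [hc] at hvlen
        simp at hvlen
        omega
      obtain ⟨k₂, v', hk₂K, hv', hveq, hvlen'⟩ := exists_simple_mul cs hvmem hvne
      have hsd : s k₂ * d = v' * d₁ := by
        rw [hvd, hveq, ← mul_assoc, ← mul_assoc, cs.simple_mul_simple_self, one_mul]
      have : ℓ (s k₂ * d) = ℓ v' + ℓ d₁ := by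
        rw [hsd]
        exact ihn (ℓ d₁) hd₁lt d₁ hd₁ rfl (ℓ v') v' hv' rfl
      have hcontra := hd k₂ hk₂K
      omega
  have hplus : ℓ (s k * (u' * d)) = ℓ (u' * d) + 1 := by
    rcases cs.length_simple_mul (u' * d) k with h | h
    · exact h
    · omega
  rw [mul_assoc, hplus, h1]
  omega

/-- Uniqueness: if both `d` and `u * d` are minimal coset representatives then `u = 1`. -/
theorem eq_one_of_both_min {u d : W} (hu : u ∈ Subgroup.closure (cs.simple '' K))
    (hd : ∀ i ∈ K, ℓ d < ℓ (s i * d)) (hud : ∀ i ∈ K, ℓ (u * d) < ℓ (s i * (u * d))) :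
    u = 1 := by
  by_contra hne
  obtain ⟨k, u', hkK, hu', rfl, hlen⟩ := exists_simple_mul cs hu hne
  have h1 : ℓ (u' * d) = ℓ u' + ℓ d :=
    length_mul_of_min cs K (ℓ d) d hd rfl (ℓ u') u' hu' rfl
  have h2 : ℓ (s k * u' * d) = ℓ (s k * u') + ℓ d :=
    length_mul_of_min cs K (ℓ d) d hd rfl (ℓ (s k * u')) (s k * u')
      (mul_mem (Subgroup.subset_closure ⟨k, hkK, rfl⟩) hu') rfl
  have h3 : s k * (s k * u' * d) = u' * d := by
    rw [← mul_assoc, ← mul_assoc, cs.simple_mul_simple_self, one_mul]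
  have h4 := hud k hkK
  rw [h3] at h4
  omega

/-- Key case analysis: for a minimal coset representative `d` with `ℓ(d s_j) = ℓ(d) + 1`,
either `d s_j = s_k d` for some `k ∈ K`, or `d s_j` is again minimal. -/
theorem key_lemma {d : W} (hd : ∀ i ∈ K, ℓ d < ℓ (s i * d)) {j : B}
    (hdj : ℓ (d * s j) = ℓ d + 1) :
    (∃ k ∈ K, d * s j = s k * d) ∨ (∀ i ∈ K, ℓ (d * s j) < ℓ (s i * (d * s j))) := by
  by_cases h : ∀ i ∈ K, ℓ (d * s j) < ℓ (s i * (d * s j))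
  · exact Or.inr h
  · left
    push_neg at h
    obtain ⟨i, hiK, hle⟩ := h
    have hlt : ℓ (s i * (d * s j)) < ℓ (d * s j) :=
      lt_of_le_of_ne hle (cs.length_simple_mul_ne (d * s j) i)
    have hsd : ℓ (s i * d) = ℓ d + 1 := by
      rcases cs.length_simple_mul d i with h' | h'
      · exact h'
      · have := hd i hiK; omega
    obtain ⟨δ, hδred, hδ⟩ := cs.exists_reduced_word' d
    have hπ : π (i :: δ) = s i * d := by rw [cs.wordProd_cons, ← hδ]
    have hlen : (i :: δ).length = ℓ d + 1 := by
      rw [List.length_cons, ← hδred, ← hδ]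
    have hdesc : ℓ (π (i :: δ) * s j) < ℓ (π (i :: δ)) := by
      rw [hπ, mul_assoc]
      omega
    obtain ⟨l, hl, hdel⟩ := exchange_right cs hdesc
    rw [hπ] at hdel
    cases l with
    | zero =>
      rw [List.eraseIdx_cons_zero, ← hδ] at hdel
      refine ⟨i, hiK, ?_⟩
      have h2 := congrArg (fun y => s i * y) hdel
      simp only [← mul_assoc] at h2
      simp only [cs.simple_mul_simple_self, one_mul] at h2
      exact h2
    | succ l' =>
      exfalso
      rw [List.eraseIdx_cons_succ, cs.wordProd_cons] at hdel
      have hcan : d * s j = π (δ.eraseIdx l') := by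
        have h2 := congrArg (fun y => s i * y) hdel
        simp only [← mul_assoc] at h2
        simp only [cs.simple_mul_simple_self, one_mul] at h2
        exact h2
      have h7 : ℓ (d * s j) ≤ (δ.eraseIdx l').length := by
        rw [hcan]; exact cs.length_wordProd_le _
      have h8 : (δ.eraseIdx l').length ≤ δ.length - 1 := by
        have := List.eraseIdx_sublist δ l'
        have h9 := this.length_le
        rcases lt_or_ge l' δ.length with hh | hh
        · have := List.length_eraseIdx_add_one hh; omega
        · simp at hl; omega
      have h10 : δ.length = ℓ d := by rw [← hδred, ← hδ]
      omega

end CoxAux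

section
variable {B W : Type*} [Group W] {M : CoxeterMatrix B} (cs : CoxeterSystem M W)

/-- The set of minimal length left coset representatives of `W_J`. -/
def DLeft (J : Set B) : Set W :=
  {w | ∀ j ∈ J, cs.length (w * cs.simple j) > cs.length w}

/-- The set of minimal length right coset representatives of `W_K` (i.e. `D_K⁻¹`). -/
def DRight (K : Set B) : Set W :=
  {w | ∀ i ∈ K, cs.length (cs.simple i * w) > cs.length w}

/-- The standard parabolic subgroup `W_J`, as a set. -/
def WPar (J : Set B) : Set W := (Subgroup.closure (cs.simple '' J) : Subgroup W)

/-- `K ∩ dJd⁻¹`, as a subset of the index set `B`. -/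
def conjInter (J K : Set B) (d : W) : Set B :=
  {i ∈ K | ∃ j ∈ J, cs.simple i = d * cs.simple j * d⁻¹}

/-- Mackey decomposition: `D_J` is the disjoint union over `d ∈ D_{K,J}` of the sets
`D^K_{K ∩ dJd⁻¹} · d`, where `D_{K,J} = D_K⁻¹ ∩ D_J` and `D^K_L = W_K ∩ D_L`. -/
theorem DLeft_eq_disjUnion_over_doubleCosetReps (J K : Set B) :
    (DLeft cs J =
      ⋃ d ∈ DRight cs K ∩ DLeft cs J,
        (fun v => v * d) '' (WPar cs K ∩ DLeft cs (conjInter cs J K d))) ∧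
    (∀ d₁ ∈ DRight cs K ∩ DLeft cs J, ∀ d₂ ∈ DRight cs K ∩ DLeft cs J, d₁ ≠ d₂ →
      Disjoint ((fun v => v * d₁) '' (WPar cs K ∩ DLeft cs (conjInter cs J K d₁)))
        ((fun v => v * d₂) '' (WPar cs K ∩ DLeft cs (conjInter cs J K d₂)))) := by
  have hpar : ∀ {u d : W}, u ∈ Subgroup.closure (cs.simple '' K) →
      (∀ i ∈ K, cs.length d < cs.length (cs.simple i * d)) →
      cs.length (u * d) = cs.length u + cs.length d :=
    fun {u d} hu hd =>
      CoxAux.length_mul_of_min cs K (cs.length d) d hd rfl (cs.length u) u hu rfl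
  constructor
  · ext w
    simp only [DLeft, DRight, WPar, conjInter, Set.mem_setOf_eq, Set.mem_iUnion,
      Set.mem_inter_iff, Set.mem_image, SetLike.mem_coe, Set.mem_sep_iff, exists_prop]
    constructor
    · intro hw
      obtain ⟨u, d, hu, hd, rfl, hlen⟩ := CoxAux.exists_decomp cs K w
      refine ⟨d, ⟨fun i hi => hd i hi, ?_⟩, u, ⟨hu, ?_⟩, rfl⟩
      · intro j hj
        by_contra hcon
        push_neg at hcon
        have hlt : cs.length (d * cs.simple j) < cs.length d :=
          lt_of_le_of_ne hcon (cs.length_mul_simple_ne d j)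
        have h1 : cs.length (u * d * cs.simple j) ≤
            cs.length u + cs.length (d * cs.simple j) := by
          rw [mul_assoc]; exact cs.length_mul_le _ _
        have h2 := hw j hj
        omega
      · intro k hk
        obtain ⟨hkK, j, hjJ, hkj⟩ := hk
        by_contra hcon
        push_neg at hcon
        have hlt : cs.length (u * cs.simple k) < cs.length u :=
          lt_of_le_of_ne hcon (cs.length_mul_simple_ne u k)
        have hsk : cs.simple k * d = d * cs.simple j := by rw [hkj]; group
        have hmem : u * cs.simple k ∈ Subgroup.closure (cs.simple '' K) :=
          mul_mem hu (Subgroup.subset_closure ⟨k, hkK, rfl⟩)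
        have h3 : u * d * cs.simple j = (u * cs.simple k) * d := by
          rw [mul_assoc, ← hsk, ← mul_assoc]
        have h4 : cs.length (u * d * cs.simple j) =
            cs.length (u * cs.simple k) + cs.length d := by
          rw [h3]; exact hpar hmem hd
        have h5 := hw j hjJ
        omega
    · rintro ⟨d, ⟨hdK, hdJ⟩, v, ⟨hvW, hvD⟩, rfl⟩
      intro j hj
      have hmin : ∀ i ∈ K, cs.length d < cs.length (cs.simple i * d) :=
        fun i hi => hdK i hi
      have hvd : cs.length (v * d) = cs.length v + cs.length d := hpar hvW hmin
      have hdj : cs.length (d * cs.simple j) = cs.length d + 1 := by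
        have := hdJ j hj
        rcases cs.length_mul_simple d j with h | h
        · exact h
        · omega
      rcases CoxAux.key_lemma cs hmin hdj with ⟨k, hkK, heq⟩ | hmin'
      · have hvk := hvD k ⟨hkK, j, hj, by rw [heq]; group⟩
        have hvk1 : cs.length (v * cs.simple k) = cs.length v + 1 := by
          rcases cs.length_mul_simple v k with h | h
          · exact h
          · omega
        have h3 : v * d * cs.simple j = (v * cs.simple k) * d := by
          rw [mul_assoc, heq, ← mul_assoc]
        have h4 : cs.length (v * d * cs.simple j) =
            cs.length (v * cs.simple k) + cs.length d := by
          rw [h3]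
          exact hpar (mul_mem hvW (Subgroup.subset_closure ⟨k, hkK, rfl⟩)) hmin
        omega
      · have h4 : cs.length (v * d * cs.simple j) =
            cs.length v + cs.length (d * cs.simple j) := by
          rw [mul_assoc]; exact hpar hvW hmin'
        omega
  · rintro d₁ ⟨hd₁K, _⟩ d₂ ⟨hd₂K, _⟩ hne
    rw [Set.disjoint_left]
    rintro x ⟨v₁, ⟨hv₁W, _⟩, h₁⟩ ⟨v₂, ⟨hv₂W, _⟩, h₂⟩
    apply hne
    have hv₁W' : v₁ ∈ Subgroup.closure (cs.simple '' K) := hv₁W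
    have hv₂W' : v₂ ∈ Subgroup.closure (cs.simple '' K) := hv₂W
    have hu : v₂⁻¹ * v₁ ∈ Subgroup.closure (cs.simple '' K) := mul_mem (inv_mem hv₂W') hv₁W'
    simp only at h₁ h₂
    have heq : (v₂⁻¹ * v₁) * d₁ = d₂ := by
      rw [mul_assoc, h₁, ← h₂]
      group
    have h1 := CoxAux.eq_one_of_both_min cs hu (fun i hi => hd₁K i hi)
      (fun i hi => by rw [heq]; exact hd₂K i hi)
    rw [h1, one_mul] at heq
    exact heq

end
end

section
/- Let (W,S) be a Coxeter system, J, K ⊆ S, and d ∈ D_{K,J}. Then every element of the double coset W_K d W_J has a factorization vdu with v ∈ D^K_{K ∩ dJd⁻¹} and u ∈ W_J satisfying l(vdu) = l(v) + l(d) + l(u). -/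
open List

namespace KilAux

attribute [local instance] Classical.propDecidable

noncomputable def etaFun {B W : Type*} [Group W] {M : CoxeterMatrix B} (cs : CoxeterSystem M W)
    (i : B) : W × ZMod 2 → W × ZMod 2 :=
  fun p => (cs.simple i * p.1 * cs.simple i, p.2 + if p.1 = cs.simple i then 1 else 0)

variable {B W : Type*} [Group W] {M : CoxeterMatrix B} (cs : CoxeterSystem M W)

theorem simple_conj_eq_simple_iff (i : B) (t : W) :
    cs.simple i * t * cs.simple i = cs.simple i ↔ t = cs.simple i := by
  constructor
  · intro h
    have := congrArg (fun x => cs.simple i * x * cs.simple i) h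
    simpa [mul_assoc] using this
  · intro h; simp [h]

theorem two_zmod : (1 : ZMod 2) + 1 = 0 := by decide

theorem etaFun_invol (i : B) : Function.Involutive (etaFun cs i) := by
  intro p
  simp only [etaFun]
  ext
  · simp [mul_assoc]
  · simp only []
    by_cases hc : p.1 = cs.simple i
    · rw [if_pos hc]; simp only [simple_conj_eq_simple_iff, hc, if_true]
      rw [add_assoc, two_zmod, add_zero]
    · rw [if_neg hc]; simp only [simple_conj_eq_simple_iff, hc]
      simp

noncomputable def eta (i : B) : Equiv.Perm (W × ZMod 2) := (etaFun_invol cs i).toPerm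

theorem eta_apply (i : B) (t : W) (ε : ZMod 2) :
    eta cs i (t, ε) = (cs.simple i * t * cs.simple i, ε + if t = cs.simple i then 1 else 0) := rfl

theorem simple_mul_pow (i i' : B) (k : ℕ) :
    cs.simple i' * (cs.simple i * cs.simple i') ^ k
      = ((cs.simple i * cs.simple i')⁻¹) ^ k * cs.simple i' := by
  induction k with
  | zero => simp
  | succ k ih =>
      have hstep : cs.simple i' * (cs.simple i * cs.simple i')
          = (cs.simple i * cs.simple i')⁻¹ * cs.simple i' := by
        simp [mul_assoc]
      rw [pow_succ', ← mul_assoc, hstep, mul_assoc, ih, ← mul_assoc, ← pow_succ']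

theorem eta_pow_apply (i i' : B) (k : ℕ) (t : W) (ε : ZMod 2) :
    ((eta cs i * eta cs i') ^ k) (t, ε) =
      ((cs.simple i * cs.simple i') ^ k * t * ((cs.simple i * cs.simple i') ^ k)⁻¹,
        ε + ∑ l ∈ Finset.range (2 * k),
          (if t = ((cs.simple i * cs.simple i')⁻¹) ^ l * cs.simple i' then 1 else 0)) := by
  set p := cs.simple i * cs.simple i' with hp
  induction k with
  | zero => simp
  | succ k ih =>
      rw [pow_succ', Equiv.Perm.mul_apply, ih, Equiv.Perm.mul_apply, eta_apply, eta_apply]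
      have key : ∀ (z : W), p ^ k * t * (p ^ k)⁻¹ = z ↔ t = (p ^ k)⁻¹ * z * p ^ k := by
        intro z
        constructor
        · intro h; rw [← h]; group
        · intro h; rw [h]; group
      have e1 : (p ^ k)⁻¹ * cs.simple i' * p ^ k = (p⁻¹) ^ (2 * k) * cs.simple i' := by
        rw [mul_assoc, simple_mul_pow cs i i' k, ← mul_assoc, ← inv_pow, ← pow_add, ← two_mul]
      have cond1 : (p ^ k * t * (p ^ k)⁻¹ = cs.simple i')
          ↔ t = (p⁻¹) ^ (2 * k) * cs.simple i' := by rw [key, e1]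
      have hx : cs.simple i' * cs.simple i * cs.simple i' = p⁻¹ * cs.simple i' := by
        rw [hp]; simp [mul_assoc]
      have e2 : (p ^ k)⁻¹ * (cs.simple i' * cs.simple i * cs.simple i') * p ^ k
          = (p⁻¹) ^ (2 * k + 1) * cs.simple i' := by
        rw [hx, mul_assoc ((p ^ k)⁻¹), mul_assoc p⁻¹, simple_mul_pow cs i i' k,
          ← inv_pow, ← mul_assoc, ← mul_assoc, ← pow_succ, ← pow_add]
        congr 2
        omega
      have cond2 : (cs.simple i' * (p ^ k * t * (p ^ k)⁻¹) * cs.simple i' = cs.simple i)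
          ↔ t = (p⁻¹) ^ (2 * k + 1) * cs.simple i' := by
        have h2 : (cs.simple i' * (p ^ k * t * (p ^ k)⁻¹) * cs.simple i' = cs.simple i)
            ↔ p ^ k * t * (p ^ k)⁻¹ = cs.simple i' * cs.simple i * cs.simple i' := by
          constructor
          · intro h
            have := congrArg (fun x => cs.simple i' * x * cs.simple i') h
            simpa [mul_assoc] using this
          · intro h; rw [h]; simp [mul_assoc]
        rw [h2, key, e2]
      rw [Prod.mk.injEq]
      constructor
      · have hfst : p ^ (k+1) * t * (p ^ (k+1))⁻¹ = p * (p ^ k * t * (p ^ k)⁻¹) * p⁻¹ := by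
          rw [pow_succ', mul_inv_rev]; group
        rw [hfst, hp]
        simp [mul_assoc]
      · simp only [cond1, cond2]
        have hrange : 2 * (k + 1) = (2 * k) + 1 + 1 := by ring
        rw [hrange, Finset.sum_range_succ, Finset.sum_range_succ, add_assoc, add_assoc]
        abel

theorem eta_liftable : M.IsLiftable (eta cs) := by
  intro i i'
  ext ⟨t, ε⟩
  · rw [eta_pow_apply]
    simp [cs.simple_mul_simple_pow i i']
  · rw [eta_pow_apply]
    set p := cs.simple i * cs.simple i' with hp
    have hpm : p ^ M i i' = 1 := cs.simple_mul_simple_pow i i'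
    have hper : ∀ l, ((if t = (p⁻¹) ^ (M i i' + l) * cs.simple i' then (1:ZMod 2) else 0))
        = (if t = (p⁻¹) ^ l * cs.simple i' then 1 else 0) := by
      intro l
      have : (p⁻¹) ^ (M i i' + l) = (p⁻¹) ^ l := by
        rw [pow_add, inv_pow, hpm]; simp
      rw [this]
    have : ∑ l ∈ Finset.range (2 * M i i'),
        (if t = (p⁻¹) ^ l * cs.simple i' then (1:ZMod 2) else 0) = 0 := by
      rw [two_mul, Finset.sum_range_add]
      simp only [hper]
      exact CharTwo.add_self_eq_zero _
    rw [this]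
    simp

noncomputable def phi : W →* Equiv.Perm (W × ZMod 2) := cs.lift ⟨eta cs, eta_liftable cs⟩

theorem phi_simple (i : B) : phi cs (cs.simple i) = eta cs i :=
  cs.lift_apply_simple (eta_liftable cs) i

noncomputable def nn : List B → W → ZMod 2
  | [], _ => 0
  | i :: ω, t =>
      (if cs.wordProd ω * t * (cs.wordProd ω)⁻¹ = cs.simple i then 1 else 0) + nn ω t

theorem phi_wordProd (ω : List B) (t : W) (ε : ZMod 2) :
    phi cs (cs.wordProd ω) (t, ε)
      = (cs.wordProd ω * t * (cs.wordProd ω)⁻¹, ε + nn cs ω t) := by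
  induction ω with
  | nil => simp [nn]
  | cons i ω ih =>
      rw [cs.wordProd_cons, map_mul, Equiv.Perm.mul_apply, ih, phi_simple, eta_apply, nn]
      rw [Prod.mk.injEq]
      constructor
      · simp [mul_assoc]
      · abel

theorem mem_ris_of_nn_ne_zero (ω : List B) (t : W) (h : nn cs ω t ≠ 0) :
    t ∈ cs.rightInvSeq ω := by
  induction ω with
  | nil => simp [nn] at h
  | cons i ω ih =>
      rw [nn] at h
      by_cases hc : cs.wordProd ω * t * (cs.wordProd ω)⁻¹ = cs.simple i
      · have ht : t = (cs.wordProd ω)⁻¹ * cs.simple i * cs.wordProd ω := by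
          rw [← hc]; group
        have : cs.rightInvSeq (i :: ω)
            = ((cs.wordProd ω)⁻¹ * cs.simple i * cs.wordProd ω) :: cs.rightInvSeq ω := rfl
        rw [this, ht]
        exact List.mem_cons_self
      · rw [if_neg hc, zero_add] at h
        have : cs.rightInvSeq (i :: ω)
            = ((cs.wordProd ω)⁻¹ * cs.simple i * cs.wordProd ω) :: cs.rightInvSeq ω := rfl
        rw [this]
        exact List.mem_cons_of_mem _ (ih h)

noncomputable def NN (w t : W) : ZMod 2 := (phi cs w (t, 0)).2

theorem NN_wordProd (ω : List B) (t : W) :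
    NN cs (cs.wordProd ω) t = nn cs ω t := by
  rw [NN, phi_wordProd]; simp

theorem phi_apply (w t : W) (ε : ZMod 2) :
    phi cs w (t, ε) = (w * t * w⁻¹, NN cs w t + ε) := by
  obtain ⟨ω, -, rfl⟩ := cs.exists_reduced_word' w
  rw [phi_wordProd, NN_wordProd]
  rw [Prod.mk.injEq]
  exact ⟨rfl, by abel⟩

theorem length_lt_of_NN (w : W) (j : B) (h : NN cs w (cs.simple j) = 1) :
    cs.length (w * cs.simple j) < cs.length w := by
  obtain ⟨ω, hred, rfl⟩ := cs.exists_reduced_word' w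
  rw [NN_wordProd] at h
  have hmem : cs.simple j ∈ cs.rightInvSeq ω :=
    mem_ris_of_nn_ne_zero cs ω _ (by rw [h]; exact one_ne_zero)
  exact (cs.isRightInversion_of_mem_rightInvSeq hred hmem).2

theorem NN_mul_simple (w : W) (j : B) :
    NN cs (w * cs.simple j) (cs.simple j) = NN cs w (cs.simple j) + 1 := by
  have h1 : NN cs (w * cs.simple j) (cs.simple j)
      = (phi cs w (phi cs (cs.simple j) (cs.simple j, 0))).2 := by
    rw [NN, map_mul, Equiv.Perm.mul_apply]
  rw [h1, phi_simple, eta_apply, if_pos rfl]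
  have : cs.simple j * cs.simple j * cs.simple j = cs.simple j := by simp
  rw [this, zero_add, phi_apply]

theorem NN_eq_one_of_descent (w : W) (j : B)
    (h : cs.length (w * cs.simple j) < cs.length w) : NN cs w (cs.simple j) = 1 := by
  by_contra hne
  have h0 : NN cs w (cs.simple j) = 0 := by
    have hall : ∀ x : ZMod 2, x = 0 ∨ x = 1 := by decide
    rcases hall (NN cs w (cs.simple j)) with h' | h'
    · exact h'
    · exact absurd h' hne
  have h1 : NN cs (w * cs.simple j) (cs.simple j) = 1 := by
    rw [NN_mul_simple, h0, zero_add]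
  have h2 := length_lt_of_NN cs _ j h1
  rw [cs.simple_mul_simple_cancel_right] at h2
  omega

theorem strong_exchange (ω : List B) (hred : cs.IsReduced ω) (j : B)
    (h : cs.length (cs.wordProd ω * cs.simple j) < cs.length (cs.wordProd ω)) :
    ∃ k, k < ω.length ∧ cs.wordProd (ω.eraseIdx k) = cs.wordProd ω * cs.simple j := by
  have h1 := NN_eq_one_of_descent cs _ j h
  rw [NN_wordProd] at h1
  have hmem : cs.simple j ∈ cs.rightInvSeq ω :=
    mem_ris_of_nn_ne_zero cs ω _ (by rw [h1]; exact one_ne_zero)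
  obtain ⟨k, hk, hget⟩ := List.mem_iff_getElem.mp hmem
  rw [cs.length_rightInvSeq] at hk
  refine ⟨k, hk, ?_⟩
  rw [← cs.wordProd_mul_getD_rightInvSeq ω k]
  congr 1
  rw [List.getD_eq_getElem _ _ (by rw [cs.length_rightInvSeq]; exact hk), hget]

end KilAux

section
variable {B W : Type*} [Group W] {M : CoxeterMatrix B} (cs : CoxeterSystem M W)

namespace KilAux

theorem mem_WPar {K : Set B} {w : W} :
    w ∈ WPar cs K ↔ w ∈ Subgroup.closure (cs.simple '' K) := Iff.rfl

theorem one_mem_WPar (K : Set B) : (1 : W) ∈ WPar cs K := (Subgroup.closure _).one_mem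

theorem mul_mem_WPar {K : Set B} {x y : W} (hx : x ∈ WPar cs K) (hy : y ∈ WPar cs K) :
    x * y ∈ WPar cs K := (Subgroup.closure _).mul_mem hx hy

theorem inv_mem_WPar {K : Set B} {x : W} (hx : x ∈ WPar cs K) :
    x⁻¹ ∈ WPar cs K := (Subgroup.closure _).inv_mem hx

theorem simple_mem_WPar {K : Set B} {i : B} (hi : i ∈ K) : cs.simple i ∈ WPar cs K :=
  Subgroup.subset_closure ⟨i, hi, rfl⟩

theorem wordProd_mem_WPar {K : Set B} {ω : List B} (hω : ∀ i ∈ ω, i ∈ K) :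
    cs.wordProd ω ∈ WPar cs K := by
  induction ω with
  | nil => simpa [cs.wordProd_nil] using one_mem_WPar cs K
  | cons i ω ih =>
      rw [cs.wordProd_cons]
      exact mul_mem_WPar cs (simple_mem_WPar cs (hω i List.mem_cons_self))
        (ih fun i' hi' => hω i' (List.mem_cons_of_mem _ hi'))

theorem exists_word_of_mem_WPar {K : Set B} {w : W} (hw : w ∈ WPar cs K) :
    ∃ ω : List B, (∀ i ∈ ω, i ∈ K) ∧ w = cs.wordProd ω := by
  refine Subgroup.closure_induction ?_ ?_ ?_ ?_ hw
  · rintro x ⟨i, hi, rfl⟩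
    exact ⟨[i], by simpa using hi, by simp⟩
  · exact ⟨[], by simp, by simp⟩
  · rintro x y - - ⟨ω₁, h₁, rfl⟩ ⟨ω₂, h₂, rfl⟩
    exact ⟨ω₁ ++ ω₂, by
      intro i hi
      rcases List.mem_append.mp hi with h | h
      exacts [h₁ i h, h₂ i h], by rw [cs.wordProd_append]⟩
  · rintro x - ⟨ω, h, rfl⟩
    exact ⟨ω.reverse, fun i hi => h i (List.mem_reverse.mp hi), by rw [cs.wordProd_reverse]⟩

theorem exists_reduced_sub : ∀ (n : ℕ) (ω : List B), ω.length ≤ n →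
    ∃ ω' : List B, cs.IsReduced ω' ∧ (∀ i ∈ ω', i ∈ ω) ∧ cs.wordProd ω' = cs.wordProd ω := by
  intro n
  induction n with
  | zero =>
      intro ω hlen
      exact ⟨ω, by
        rw [List.length_eq_zero_iff.mp (Nat.le_zero.mp hlen)]
        simp [CoxeterSystem.IsReduced], fun i h => h, rfl⟩
  | succ n ih =>
      intro ω hlen
      by_cases hred : cs.IsReduced ω
      · exact ⟨ω, hred, fun i h => h, rfl⟩
      · have hex : ∃ k, ¬ cs.IsReduced (ω.take (k+1)) :=
          ⟨ω.length, by rwa [List.take_of_length_le (by omega)]⟩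
        classical
        set k₀ := Nat.find hex with hk₀def
        have hk₀ : ¬ cs.IsReduced (ω.take (k₀+1)) := Nat.find_spec hex
        have hredk : cs.IsReduced (ω.take k₀) := by
          match hk : k₀ with
          | 0 => simp [CoxeterSystem.IsReduced]
          | m+1 =>
              have := Nat.find_min hex (by omega : m < k₀)
              rw [not_not] at this
              exact this
        have hk₀lt : k₀ < ω.length := by
          by_contra hcon
          push_neg at hcon
          rw [List.take_of_length_le hcon] at hredk
          exact hred hredk
        have hsplit : ω.take (k₀+1) = ω.take k₀ ++ [ω[k₀]] := by
          rw [List.take_succ, List.getElem?_eq_getElem hk₀lt]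
          rfl
        have hlx : cs.length (cs.wordProd (ω.take k₀)) = k₀ := by
          have := hredk
          rwa [CoxeterSystem.IsReduced, List.length_take, min_eq_left (le_of_lt hk₀lt)] at this
        have hlt : cs.length (cs.wordProd (ω.take k₀) * cs.simple ω[k₀])
            < cs.length (cs.wordProd (ω.take k₀)) := by
          rcases cs.length_mul_simple (cs.wordProd (ω.take k₀)) ω[k₀] with h' | h'
          · exfalso
            apply hk₀
            rw [CoxeterSystem.IsReduced, hsplit, cs.wordProd_append, cs.wordProd_singleton,
              h', hlx]
            simp [List.length_take, min_eq_left (le_of_lt hk₀lt)]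
            omega
          · omega
        obtain ⟨m, hm, heq⟩ := strong_exchange cs (ω.take k₀) hredk ω[k₀] hlt
        rw [List.length_take, min_eq_left (le_of_lt hk₀lt)] at hm
        set ω₂ := (ω.take k₀).eraseIdx m ++ ω.drop (k₀+1) with hω₂
        have hprod : cs.wordProd ω₂ = cs.wordProd ω := by
          conv_rhs => rw [← List.take_append_drop (k₀+1) ω]
          rw [hω₂, cs.wordProd_append, cs.wordProd_append, heq, hsplit, cs.wordProd_append,
            cs.wordProd_singleton]
        have hlen₂ : ω₂.length ≤ n := by
          rw [hω₂, List.length_append, List.length_eraseIdx, List.length_drop,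
            List.length_take]
          rw [min_eq_left (le_of_lt hk₀lt)]
          rw [if_pos hm]
          omega
        obtain ⟨ω', h1, h2, h3⟩ := ih ω₂ hlen₂
        refine ⟨ω', h1, ?_, by rw [h3, hprod]⟩
        intro i hi
        rcases List.mem_append.mp (h2 i hi) with h | h
        · exact (List.take_sublist k₀ ω).mem ((List.eraseIdx_sublist _ m).mem h)
        · exact (List.drop_sublist (k₀+1) ω).mem h

theorem exists_reduced_word_sub {K : Set B} {w : W} (hw : w ∈ WPar cs K) :
    ∃ ω : List B, cs.IsReduced ω ∧ (∀ i ∈ ω, i ∈ K) ∧ w = cs.wordProd ω := by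
  obtain ⟨ω, hωK, rfl⟩ := exists_word_of_mem_WPar cs hw
  obtain ⟨ω', h1, h2, h3⟩ := exists_reduced_sub cs ω.length ω le_rfl
  exact ⟨ω', h1, fun i hi => hωK i (h2 i hi), h3.symm⟩

theorem split_right {K : Set B} {u : W} (hu : u ∈ WPar cs K) (hne : u ≠ 1) :
    ∃ u' j, j ∈ K ∧ u' ∈ WPar cs K ∧ u = u' * cs.simple j ∧
      cs.length u' + 1 = cs.length u := by
  obtain ⟨ω, hred, hωK, rfl⟩ := exists_reduced_word_sub cs hu
  have hωne : ω ≠ [] := by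
    rintro rfl
    simp at hne
  have hsplit : ω = ω.dropLast ++ [ω.getLast hωne] := (List.dropLast_append_getLast hωne).symm
  refine ⟨cs.wordProd ω.dropLast, ω.getLast hωne, hωK _ (List.getLast_mem hωne),
    wordProd_mem_WPar cs (fun i hi => hωK i (List.dropLast_sublist ω |>.mem hi)), ?_, ?_⟩
  · conv_lhs => rw [hsplit]
    rw [cs.wordProd_append, cs.wordProd_singleton]
  · have hredd : cs.IsReduced ω.dropLast := by
      rw [List.dropLast_eq_take]
      exact hred.take _
    rw [hredd, hred, List.length_dropLast]
    have : ω.length ≠ 0 := fun h => hωne (List.length_eq_zero_iff.mp h)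
    omega

theorem split_left {K : Set B} {u : W} (hu : u ∈ WPar cs K) (hne : u ≠ 1) :
    ∃ j u', j ∈ K ∧ u' ∈ WPar cs K ∧ u = cs.simple j * u' ∧
      cs.length u' + 1 = cs.length u := by
  have hinv : u⁻¹ ∈ WPar cs K := inv_mem_WPar cs hu
  obtain ⟨z, j, hjK, hz, heq, hlen⟩ := split_right cs hinv (by simpa using hne)
  refine ⟨j, z⁻¹, hjK, inv_mem_WPar cs hz, ?_, ?_⟩
  · have := congrArg (·⁻¹) heq
    simpa [mul_assoc] using this
  · rw [cs.length_inv]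
    rwa [cs.length_inv u] at hlen

theorem min_coset_additive {P : Set B} {d0 : W}
    (hmin : ∀ z ∈ WPar cs P, cs.length d0 ≤ cs.length (d0 * z)) :
    ∀ (n : ℕ) (u : W), u ∈ WPar cs P → cs.length u ≤ n →
      cs.length (d0 * u) = cs.length d0 + cs.length u := by
  intro n
  induction n with
  | zero =>
      intro u hu hlen
      have : u = 1 := cs.length_eq_zero_iff.mp (Nat.le_zero.mp hlen)
      simp [this]
  | succ n ih =>
      intro u hu hlen
      by_cases hu1 : u = 1
      · simp [hu1]
      obtain ⟨u', j, hjP, hu', hueq, hlu'⟩ := split_right cs hu hu1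
      subst hueq
      have h1 : cs.length (d0 * u') = cs.length d0 + cs.length u' :=
        ih u' hu' (by omega)
      rcases cs.length_mul_simple (d0 * u') j with hp | hm
      · rw [← mul_assoc, hp, h1]
        omega
      · exfalso
        obtain ⟨ρ, hρred, rfl⟩ := cs.exists_reduced_word' d0
        obtain ⟨ω', hω'red, hω'P, rfl⟩ := exists_reduced_word_sub cs hu'
        set σ := ρ ++ ω' with hσ
        have hπσ : cs.wordProd σ = cs.wordProd ρ * cs.wordProd ω' := cs.wordProd_append ρ ω'
        have hσred : cs.IsReduced σ := by
          rw [CoxeterSystem.IsReduced, hπσ, h1, List.length_append, hρred, hω'red]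
        have hlt : cs.length (cs.wordProd σ * cs.simple j) < cs.length (cs.wordProd σ) := by
          rw [hπσ]
          omega
        obtain ⟨k, hk, heq⟩ := strong_exchange cs σ hσred j hlt
        rw [hσ, List.length_append] at hk
        by_cases hcase : k < ρ.length
        · have herase : σ.eraseIdx k = ρ.eraseIdx k ++ ω' :=
            List.eraseIdx_append_of_lt_length hcase ω'
          rw [herase, cs.wordProd_append, hπσ] at heq
          set z := cs.wordProd ω' * cs.simple j * (cs.wordProd ω')⁻¹ with hz
          have hzP : z ∈ WPar cs P :=
            mul_mem_WPar cs (mul_mem_WPar cs (wordProd_mem_WPar cs hω'P)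
              (simple_mem_WPar cs hjP)) (inv_mem_WPar cs (wordProd_mem_WPar cs hω'P))
          have hd0z : cs.wordProd ρ * z = cs.wordProd (ρ.eraseIdx k) := by
            rw [hz, ← mul_assoc, ← mul_assoc, ← heq]
            simp [mul_assoc]
          have hlen1 : cs.length (cs.wordProd (ρ.eraseIdx k)) ≤ ρ.length - 1 := by
            have := cs.length_wordProd_le (ρ.eraseIdx k)
            rwa [List.length_eraseIdx, if_pos hcase] at this
          have := hmin z hzP
          rw [hd0z] at this
          rw [hρred] at *
          omega
        · push_neg at hcase
          have herase : σ.eraseIdx k = ρ ++ ω'.eraseIdx (k - ρ.length) :=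
            List.eraseIdx_append_of_length_le hcase ω'
          rw [herase, cs.wordProd_append, hπσ, mul_assoc] at heq
          have heq2 : cs.wordProd (ω'.eraseIdx (k - ρ.length))
              = cs.wordProd ω' * cs.simple j := mul_left_cancel heq
          have hlen2 : cs.length (cs.wordProd ω' * cs.simple j) ≤ ω'.length - 1 := by
            rw [← heq2]
            have := cs.length_wordProd_le (ω'.eraseIdx (k - ρ.length))
            rwa [List.length_eraseIdx, if_pos (by omega)] at this
          rw [hω'red] at *
          omega

theorem dleft_additive {P : Set B} {d : W} (hd : d ∈ DLeft cs P) :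
    ∀ u ∈ WPar cs P, cs.length (d * u) = cs.length d + cs.length u := by
  classical
  have hSne : {n | ∃ z ∈ WPar cs P, cs.length (d * z) = n}.Nonempty :=
    ⟨cs.length (d * 1), 1, one_mem_WPar cs P, rfl⟩
  obtain ⟨z0, hz0P, hz0len⟩ := Nat.sInf_mem hSne
  set d0 := d * z0 with hd0
  have hmin : ∀ z ∈ WPar cs P, cs.length d0 ≤ cs.length (d0 * z) := by
    intro z hz
    rw [hz0len]
    exact Nat.sInf_le ⟨z0 * z, mul_mem_WPar cs hz0P hz, by rw [← mul_assoc]⟩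
  have hM : ∀ u ∈ WPar cs P, cs.length (d0 * u) = cs.length d0 + cs.length u :=
    fun u hu => min_coset_additive cs hmin (cs.length u) u hu le_rfl
  have hz0inv : z0⁻¹ ∈ WPar cs P := inv_mem_WPar cs hz0P
  have hdd : d = d0 * z0⁻¹ := by rw [hd0, mul_assoc]; simp
  by_cases hz1 : z0⁻¹ = 1
  · have : d0 = d := by rw [hdd, hz1, mul_one]
    rw [← this]
    exact hM
  · exfalso
    obtain ⟨z', j, hjP, hz'P, hzeq, hzlen⟩ := split_right cs hz0inv hz1
    have heq2 : d * cs.simple j = d0 * z' := by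
      rw [hdd, hzeq, mul_assoc]
      simp [mul_assoc]
    have h2 : cs.length (d * cs.simple j) = cs.length d0 + cs.length z' := by
      rw [heq2]; exact hM z' hz'P
    have h3 : cs.length d = cs.length d0 + cs.length z0⁻¹ := by
      rw [hdd]; exact hM z0⁻¹ hz0inv
    have h4 := hd j hjP
    omega

theorem dright_additive {K : Set B} {d : W} (hd : d ∈ DRight cs K) :
    ∀ v ∈ WPar cs K, cs.length (v * d) = cs.length v + cs.length d := by
  intro v hv
  have hdinv : d⁻¹ ∈ DLeft cs K := by
    intro i hi
    have h1 := hd i hi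
    have h2 : cs.length (d⁻¹ * cs.simple i) = cs.length (cs.simple i * d) := by
      rw [← cs.length_inv (d⁻¹ * cs.simple i)]
      simp
    show cs.length (d⁻¹ * cs.simple i) > cs.length d⁻¹
    rw [h2, cs.length_inv]
    exact h1
  have h3 := dleft_additive cs hdinv v⁻¹ (inv_mem_WPar cs hv)
  have h4 : cs.length (v * d) = cs.length (d⁻¹ * v⁻¹) := by
    rw [← cs.length_inv]
    simp
  rw [h4, h3, cs.length_inv, cs.length_inv]
  omega

theorem deodhar {J : Set B} {d : W} (hd : d ∈ DLeft cs J) (i : B)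
    (hlen : cs.length (cs.simple i * d) = cs.length d + 1)
    (hnot : cs.simple i * d ∉ DLeft cs J) :
    ∃ j ∈ J, cs.simple i * d = d * cs.simple j := by
  have hnot' : ∃ j ∈ J, cs.length (cs.simple i * d * cs.simple j)
      < cs.length (cs.simple i * d) := by
    by_contra hcon
    push_neg at hcon
    apply hnot
    intro j hj
    have h1 := hcon j hj
    have h2 := cs.length_mul_simple_ne (cs.simple i * d) j
    omega
  obtain ⟨j, hjJ, hlt⟩ := hnot'
  obtain ⟨ωd, hωdred, rfl⟩ := cs.exists_reduced_word' d
  set ω := i :: ωd with hω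
  have hπω : cs.wordProd ω = cs.simple i * cs.wordProd ωd := cs.wordProd_cons i ωd
  have hωred : cs.IsReduced ω := by
    rw [CoxeterSystem.IsReduced, hπω, hlen, hω, List.length_cons, hωdred]
  obtain ⟨k, hk, heq⟩ := strong_exchange cs ω hωred j (by rw [hπω]; exact hlt)
  match k with
  | 0 =>
      rw [hω] at heq
      simp only [List.eraseIdx_cons_zero] at heq
      rw [hπω] at heq
      refine ⟨j, hjJ, ?_⟩
      have := congrArg (cs.simple i * ·) heq
      rw [← mul_assoc] at this
      simp at this
      rw [← this]
  | (k' + 1) =>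
      exfalso
      rw [hω] at heq
      simp only [List.eraseIdx_cons_succ] at heq
      rw [cs.wordProd_cons, hπω, mul_assoc] at heq
      have heq2 : cs.wordProd (ωd.eraseIdx k') = cs.wordProd ωd * cs.simple j :=
        mul_left_cancel heq
      have hk' : k' < ωd.length := by
        rw [hω] at hk
        simpa using hk
      have hle : cs.length (cs.wordProd ωd * cs.simple j) ≤ ωd.length - 1 := by
        rw [← heq2]
        have := cs.length_wordProd_le (ωd.eraseIdx k')
        rwa [List.length_eraseIdx, if_pos hk'] at this
      have hgt := hd j hjJ
      rw [hωdred] at *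
      omega

theorem kilmoyer {J K : Set B} {d : W} (hdK : d ∈ DRight cs K) (hdJ : d ∈ DLeft cs J) :
    ∀ (n : ℕ) (c : W), cs.length c ≤ n → c ∈ WPar cs K → d⁻¹ * c * d ∈ WPar cs J →
      c ∈ WPar cs (conjInter cs J K d) := by
  intro n
  induction n with
  | zero =>
      intro c hlen _ _
      have : c = 1 := cs.length_eq_zero_iff.mp (Nat.le_zero.mp hlen)
      rw [this]
      exact one_mem_WPar cs _
  | succ n ih =>
      intro c hlen hcK hcJ
      by_cases hc1 : c = 1
      · rw [hc1]; exact one_mem_WPar cs _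
      obtain ⟨i, c', hiK, hc'K, hceq, hlc'⟩ := split_left cs hcK hc1
      have hyJ : d⁻¹ * c * d ∈ WPar cs J := hcJ
      have hylen : cs.length (d⁻¹ * c * d) = cs.length c := by
        have h1 : cs.length (c * d) = cs.length c + cs.length d :=
          dright_additive cs hdK c hcK
        have h2 : cs.length (d * (d⁻¹ * c * d))
            = cs.length d + cs.length (d⁻¹ * c * d) :=
          dleft_additive cs hdJ _ hcJ
        have h3 : d * (d⁻¹ * c * d) = c * d := by simp [mul_assoc]
        rw [h3] at h2
        omega
      have hsd : cs.length (cs.simple i * d) = cs.length d + 1 := by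
        have h1 := hdK i hiK
        rcases cs.length_simple_mul d i with h' | h'
        · exact h'
        · omega
      by_cases hD : cs.simple i * d ∈ DLeft cs J
      · exfalso
        have h4 : cs.length (cs.simple i * d * (d⁻¹ * c * d))
            = cs.length (cs.simple i * d) + cs.length (d⁻¹ * c * d) :=
          dleft_additive cs hD _ hcJ
        have h5 : cs.simple i * d * (d⁻¹ * c * d) = c' * d := by
          have hc' : c' = cs.simple i * c := by
            rw [hceq, ← mul_assoc]
            simp
          rw [hc']
          simp [mul_assoc]
        have h6 : cs.length (c' * d) = cs.length c' + cs.length d :=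
          dright_additive cs hdK c' hc'K
        rw [h5, h6] at h4
        omega
      · obtain ⟨j, hjJ, heqd⟩ := deodhar cs hdJ i hsd hD
        have hiL : i ∈ conjInter cs J K d := by
          refine ⟨hiK, j, hjJ, ?_⟩
          rw [← heqd]
          simp [mul_assoc]
        have hc'J : d⁻¹ * c' * d ∈ WPar cs J := by
          have hconj : d⁻¹ * cs.simple i * d = cs.simple j := by
            rw [mul_assoc, heqd, ← mul_assoc]
            simp
          have hc' : c' = cs.simple i * c := by
            rw [hceq, ← mul_assoc]
            simp
          have : d⁻¹ * c' * d = cs.simple j * (d⁻¹ * c * d) := by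
            rw [hc', ← hconj]
            simp [mul_assoc]
          rw [this]
          exact mul_mem_WPar cs (simple_mem_WPar cs hjJ) hcJ
        have hc'L := ih c' (by omega) hc'K hc'J
        rw [hceq]
        exact mul_mem_WPar cs (simple_mem_WPar cs hiL) hc'L

theorem length_vdu {J K : Set B} {d : W} (hdK : d ∈ DRight cs K) (hdJ : d ∈ DLeft cs J)
    {v : W} (hvK : v ∈ WPar cs K) (hvD : v ∈ DLeft cs (conjInter cs J K d)) :
    ∀ (n : ℕ) (u : W), cs.length u ≤ n → u ∈ WPar cs J →
      cs.length (v * d * u) = cs.length v + cs.length d + cs.length u := by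
  intro n
  induction n with
  | zero =>
      intro u hlen huJ
      have : u = 1 := cs.length_eq_zero_iff.mp (Nat.le_zero.mp hlen)
      rw [this]
      simp [dright_additive cs hdK v hvK]
  | succ n ih =>
      intro u hlen huJ
      by_cases hu1 : u = 1
      · rw [hu1]
        simp [dright_additive cs hdK v hvK]
      obtain ⟨u', j, hjJ, hu'J, hueq, hlu'⟩ := split_right cs huJ hu1
      subst hueq
      have h1 : cs.length (v * d * u') = cs.length v + cs.length d + cs.length u' :=
        ih u' (by omega) hu'J
      rcases cs.length_mul_simple (v * d * u') j with hp | hm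
      · rw [← mul_assoc, hp, h1]
        omega
      · exfalso
        obtain ⟨ωv, hvred, hvsub, hveq⟩ := exists_reduced_word_sub cs hvK
        obtain ⟨ωd, hdred, hdeq⟩ := cs.exists_reduced_word' d
        obtain ⟨ω', hured, husub, hueq'⟩ := exists_reduced_word_sub cs hu'J
        have hlv : ωv.length = cs.length v := by rw [hveq]; exact hvred.symm
        have hld : ωd.length = cs.length d := by rw [hdeq]; exact hdred.symm
        have hlu'' : ω'.length = cs.length u' := by rw [hueq']; exact hured.symm
        set σ := ωv ++ (ωd ++ ω') with hσ
        have hπσ : cs.wordProd σ = v * d * u' := by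
          rw [hσ, cs.wordProd_append, cs.wordProd_append, ← hveq, ← hdeq, ← hueq',
            ← mul_assoc]
        have hσred : cs.IsReduced σ := by
          rw [CoxeterSystem.IsReduced, hπσ, h1, hσ]
          simp [List.length_append, hlv, hld, hlu'']
          omega
        have hlt : cs.length (cs.wordProd σ * cs.simple j) < cs.length (cs.wordProd σ) := by
          rw [hπσ]
          omega
        obtain ⟨k, hk, heq⟩ := strong_exchange cs σ hσred j hlt
        rw [hσ, List.length_append, List.length_append] at hk
        rw [hπσ] at heq
        by_cases hc1 : k < ωv.length
        · have herase : σ.eraseIdx k = ωv.eraseIdx k ++ (ωd ++ ω') :=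
            List.eraseIdx_append_of_lt_length hc1 _
          rw [herase, cs.wordProd_append, cs.wordProd_append, ← hdeq, ← hueq'] at heq
          set vh := cs.wordProd (ωv.eraseIdx k) with hvh
          set c := v⁻¹ * vh with hc
          have hvc : v * c = vh := by rw [hc]; group
          have hcK : c ∈ WPar cs K := mul_mem_WPar cs (inv_mem_WPar cs hvK)
            (wordProd_mem_WPar cs (fun i hi => hvsub i ((List.eraseIdx_sublist ωv k).mem hi)))
          have hvheq : vh = v * d * u' * cs.simple j * (d * u')⁻¹ := by
            rw [← heq]
            group
          have hcJ : d⁻¹ * c * d ∈ WPar cs J := by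
            have hcy : d⁻¹ * c * d = u' * cs.simple j * u'⁻¹ := by
              rw [hc, hvheq]
              group
            rw [hcy]
            exact mul_mem_WPar cs (mul_mem_WPar cs hu'J (simple_mem_WPar cs hjJ))
              (inv_mem_WPar cs hu'J)
          have hcL := kilmoyer cs hdK hdJ (cs.length c) c le_rfl hcK hcJ
          have hadd := dleft_additive cs hvD c hcL
          rw [hvc] at hadd
          have hlvh : cs.length vh ≤ ωv.length - 1 := by
            have := cs.length_wordProd_le (ωv.eraseIdx k)
            rwa [List.length_eraseIdx, if_pos hc1] at this
          omega
        · push_neg at hc1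
          have herase : σ.eraseIdx k = ωv ++ ((ωd ++ ω').eraseIdx (k - ωv.length)) :=
            List.eraseIdx_append_of_length_le hc1 _
          set k₂ := k - ωv.length with hk₂
          have hk₂lt : k₂ < ωd.length + ω'.length := by omega
          by_cases hc2 : k₂ < ωd.length
          · have herase2 : (ωd ++ ω').eraseIdx k₂ = ωd.eraseIdx k₂ ++ ω' :=
              List.eraseIdx_append_of_lt_length hc2 _
            rw [herase, herase2, cs.wordProd_append, cs.wordProd_append, ← hveq,
              ← hueq'] at heq
            set dh := cs.wordProd (ωd.eraseIdx k₂) with hdh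
            have heq2 : dh * u' = d * (u' * cs.simple j) := by
              have h' : v * (dh * u') = v * (d * (u' * cs.simple j)) := by
                rw [heq]
                group
              exact mul_left_cancel h'
            have hdy : d * (u' * cs.simple j * u'⁻¹) = dh := by
              have h'' : d * (u' * cs.simple j * u'⁻¹) = d * (u' * cs.simple j) * u'⁻¹ := by
                group
              rw [h'', ← heq2]
              group
            have hyJ : u' * cs.simple j * u'⁻¹ ∈ WPar cs J :=
              mul_mem_WPar cs (mul_mem_WPar cs hu'J (simple_mem_WPar cs hjJ))
                (inv_mem_WPar cs hu'J)
            have hadd := dleft_additive cs hdJ _ hyJ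
            rw [hdy] at hadd
            have hldh : cs.length dh ≤ ωd.length - 1 := by
              have := cs.length_wordProd_le (ωd.eraseIdx k₂)
              rwa [List.length_eraseIdx, if_pos hc2] at this
            omega
          · push_neg at hc2
            have herase2 : (ωd ++ ω').eraseIdx k₂ = ωd ++ ω'.eraseIdx (k₂ - ωd.length) :=
              List.eraseIdx_append_of_length_le hc2 _
            rw [herase, herase2, cs.wordProd_append, cs.wordProd_append, ← hveq,
              ← hdeq] at heq
            have heq2 : cs.wordProd (ω'.eraseIdx (k₂ - ωd.length)) = u' * cs.simple j := by
              have h' : v * (d * cs.wordProd (ω'.eraseIdx (k₂ - ωd.length)))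
                  = v * (d * (u' * cs.simple j)) := by
                rw [heq]
                group
              exact mul_left_cancel (mul_left_cancel h')
            have hlee : cs.length (u' * cs.simple j) ≤ ω'.length - 1 := by
              rw [← heq2]
              have := cs.length_wordProd_le (ω'.eraseIdx (k₂ - ωd.length))
              rwa [List.length_eraseIdx, if_pos (by omega)] at this
            omega

theorem stepA {J K : Set B} {d : W} :
    ∀ (n : ℕ) (a : W), cs.length a ≤ n → a ∈ WPar cs K → ∀ b ∈ WPar cs J,
      ∃ v, v ∈ WPar cs K ∧ v ∈ DLeft cs (conjInter cs J K d) ∧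
        ∃ u ∈ WPar cs J, a * d * b = v * d * u := by
  intro n
  induction n with
  | zero =>
      intro a hlen haK b hbJ
      have ha1 : a = 1 := cs.length_eq_zero_iff.mp (Nat.le_zero.mp hlen)
      refine ⟨1, one_mem_WPar cs K, ?_, b, hbJ, by rw [ha1]⟩
      intro i _
      simp [cs.length_simple]
  | succ n ih =>
      intro a hlen haK b hbJ
      by_cases hD : a ∈ DLeft cs (conjInter cs J K d)
      · exact ⟨a, haK, hD, b, hbJ, rfl⟩
      · have hnot : ∃ i ∈ conjInter cs J K d, cs.length (a * cs.simple i) < cs.length a := by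
          by_contra hcon
          push_neg at hcon
          apply hD
          intro i hi
          have h1 := hcon i hi
          have h2 := cs.length_mul_simple_ne a i
          show cs.length (a * cs.simple i) > cs.length a
          omega
        obtain ⟨i, hiL, hilt⟩ := hnot
        obtain ⟨hiK, j, hjJ, hconj⟩ := hiL
        have hsid : cs.simple i * d = d * cs.simple j := by
          rw [hconj]
          group
        have haK' : a * cs.simple i ∈ WPar cs K :=
          mul_mem_WPar cs haK (simple_mem_WPar cs hiK)
        have hbJ' : cs.simple j * b ∈ WPar cs J :=
          mul_mem_WPar cs (simple_mem_WPar cs hjJ) hbJ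
        obtain ⟨v, hvK, hvD, u, huJ, heq⟩ :=
          ih (a * cs.simple i) (by omega) haK' (cs.simple j * b) hbJ'
        refine ⟨v, hvK, hvD, u, huJ, ?_⟩
        have hh : a * cs.simple i * d * (cs.simple j * b) = a * d * b := by
          rw [mul_assoc a (cs.simple i) d, hsid]
          simp [mul_assoc]
        rw [← heq, hh]

end KilAux

/-- Every element of the double coset `W_K d W_J`, for `d ∈ D_{K,J}`, has a factorization
`v * d * u` with `v ∈ D^K_{K ∩ dJd⁻¹}`, `u ∈ W_J`, and `l(vdu) = l(v) + l(d) + l(u)`. -/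
theorem doubleCoset_factorization (J K : Set B) (d : W)
    (hd : d ∈ DRight cs K ∩ DLeft cs J) (w : W)
    (hw : ∃ a ∈ WPar cs K, ∃ b ∈ WPar cs J, w = a * d * b) :
    ∃ v ∈ WPar cs K ∩ DLeft cs (conjInter cs J K d), ∃ u ∈ WPar cs J,
      w = v * d * u ∧ cs.length w = cs.length v + cs.length d + cs.length u := by
  obtain ⟨a, haK, b, hbJ, rfl⟩ := hw
  obtain ⟨hdK, hdJ⟩ := hd
  obtain ⟨v, hvK, hvD, u, huJ, heq⟩ :=
    KilAux.stepA cs (cs.length a) a le_rfl haK b hbJ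
  refine ⟨v, ⟨hvK, hvD⟩, u, huJ, heq, ?_⟩
  rw [heq]
  exact KilAux.length_vdu cs hdK hdJ hvK hvD (cs.length u) u le_rfl huJ

end
end

section
/- With the endomorphisms φ_s, φ_t of the free ℤ[q,q⁻¹]-module on basis v₁,...,v_{k+1} defined as in the path-graph W-graph construction (φ_r multiplies v_i by -q⁻¹ when v_i has colour r, and otherwise sends v_i to q v_i plus the sum of its neighbours; vertex v_i has colour s if i is odd and colour t if i is even), the alternating products [..φ_sφ_t]_n and [..φ_tφ_s]_n (each with n factors, defined by [..xy]_n = (xy)^{n/2} for n even and y(xy)^{(n-1)/2} for n odd) are equal if and only if k+2 divides n. -/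
open LaurentPolynomial

/-- Matrix of `φ_s` on the path-graph `W`-graph with vertices `v₁, ..., v_{k+1}`
(1-based index `i+1` for `i : Fin (k+1)`): `φ_s` multiplies `v_i` by `-q⁻¹` when `i` is
odd (colour `s`), and sends `v_i` to `q v_i + v_{i-1} + v_{i+1}` when `i` is even. -/
noncomputable def pathPhiS (k : ℕ) : Matrix (Fin (k + 1)) (Fin (k + 1)) (LaurentPolynomial ℤ) :=
  fun j i =>
    if Even (i : ℕ) then (if j = i then -T (-1) else 0)
    else (if j = i then T 1 else if (j : ℕ) + 1 = (i : ℕ) ∨ (i : ℕ) + 1 = (j : ℕ) then 1 else 0)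

/-- Matrix of `φ_t`: multiplies `v_i` by `-q⁻¹` when `i` is even (colour `t`), and sends
`v_i` to `q v_i + v_{i-1} + v_{i+1}` when `i` is odd. -/
noncomputable def pathPhiT (k : ℕ) : Matrix (Fin (k + 1)) (Fin (k + 1)) (LaurentPolynomial ℤ) :=
  fun j i =>
    if ¬ Even (i : ℕ) then (if j = i then -T (-1) else 0)
    else (if j = i then T 1 else if (j : ℕ) + 1 = (i : ℕ) ∨ (i : ℕ) + 1 = (j : ℕ) then 1 else 0)

/-- The alternating product `[..xy]_n` with `n` factors:
`(xy)^(n/2)` if `n` is even, `y(xy)^((n-1)/2)` if `n` is odd. -/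
def altProd {R : Type*} [Monoid R] (x y : R) (n : ℕ) : R :=
  if Even n then (x * y) ^ (n / 2) else y * (x * y) ^ (n / 2)

local notation "A" => LaurentPolynomial ℤ

noncomputable def gg (r : ℕ) (d : ℤ) : A :=
  if d.natAbs ≤ r then (if Even (d + r) then 1 else T 1) else 0

noncomputable def hh (r : ℕ) (d : ℤ) : A :=
  if d.natAbs < r then (if Even (d + r) then -1 else -T (-1)) else 0

lemma keyT : (T (-1) : A) * T 1 = 1 := by rw [← T_add]; norm_num

lemma gg_zero {r : ℕ} {d : ℤ} (h : r < d.natAbs) : gg r d = 0 := by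
  rw [gg, if_neg (by omega)]

lemma hh_zero {r : ℕ} {d : ℤ} (h : r ≤ d.natAbs) : hh r d = 0 := by
  rw [hh, if_neg (by omega)]

lemma gg_step1 (r : ℕ) (d : ℤ) (hd : Even (d + r)) : gg (r+1) d = T 1 * gg r d := by
  unfold gg
  push_cast
  split_ifs <;>
    first
      | ring1
      | (exfalso; simp only [Int.even_iff] at *; omega)
      | linear_combination keyT

lemma gg_step3 (r : ℕ) (d : ℤ) (hd : ¬ Even (d + r)) :
    gg (r+1) d = -T (-1) * gg r d + gg r (d-1) + gg r (d+1) := by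
  unfold gg
  push_cast
  split_ifs <;>
    first
      | ring1
      | (exfalso; simp only [Int.even_iff] at *; omega)
      | linear_combination keyT
      | linear_combination -keyT

lemma hh_step1 (r : ℕ) (d : ℤ) (hd : ¬ Even (d + r)) : hh (r+1) d = T 1 * hh r d := by
  unfold hh
  push_cast
  split_ifs <;>
    first
      | ring1
      | (exfalso; simp only [Int.even_iff] at *; omega)
      | linear_combination keyT
      | linear_combination -keyT

lemma hh_step3 (r : ℕ) (hr : 1 ≤ r) (d : ℤ) (hd : Even (d + r)) :
    hh (r+1) d = -T (-1) * hh r d + hh r (d-1) + hh r (d+1) := by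
  unfold hh
  push_cast
  split_ifs <;>
    first
      | ring1
      | (exfalso; simp only [Int.even_iff] at *; omega)
      | linear_combination keyT
      | linear_combination -keyT


theorem altProd_succ {R : Type*} [Monoid R] (x y : R) (r : ℕ) :
    altProd x y (r+1) = (if Even r then y else x) * altProd x y r := by
  unfold altProd
  rcases Nat.even_or_odd r with h | h
  · obtain ⟨c, rfl⟩ := h
    have h1 : ¬ Even (c + c + 1) := by simp [Nat.even_add_one, Nat.even_add]
    have h2 : (c + c + 1) / 2 = (c + c) / 2 := by omega
    simp [Nat.even_add, h1, h2]
  · obtain ⟨c, rfl⟩ := h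
    have h0 : ¬ Even (2*c + 1) := by simp [Nat.even_add_one]
    have h1 : Even (2*c + 1 + 1) := by simp [Nat.even_add_one, h0]
    have h2 : (2*c + 1 + 1) / 2 = (2*c + 1) / 2 + 1 := by omega
    simp only [h1, if_pos, if_neg h0, h2, pow_succ']
    rw [← mul_assoc]

lemma shuttle {R : Type*} [Monoid R] (x y : R) (n : ℕ) :
    y * (x * y) ^ n = (y * x) ^ n * y := by
  induction n with
  | zero => simp
  | succ n ih => rw [pow_succ, ← mul_assoc, ih, pow_succ]; simp [mul_assoc]

theorem altProd_add {R : Type*} [Monoid R] (x y : R) (a b : ℕ) :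
    altProd x y (a + b) = (if Even b then altProd x y a else altProd y x a)
      * altProd x y b := by
  unfold altProd
  rcases Nat.even_or_odd a with ⟨α, rfl⟩ | ⟨α, rfl⟩ <;>
    rcases Nat.even_or_odd b with ⟨β, rfl⟩ | ⟨β, rfl⟩
  · have e1 : Even (α + α + (β + β)) := by simp [Nat.even_add]
    have e2 : Even (α + α) := by simp [Nat.even_add]
    have e3 : Even (β + β) := by simp [Nat.even_add]
    have d1 : (α + α + (β + β))/2 = (α+α)/2 + (β+β)/2 := by omega
    simp [e1, e2, e3, d1, pow_add]
  · have e1 : ¬ Even (α + α + (2*β+1)) := by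
      simp only [Nat.even_add, Nat.even_add_one]
      simp [Nat.even_add]
    have e2 : Even (α + α) := by simp [Nat.even_add]
    have e3 : ¬ Even (2*β+1) := by simp [Nat.even_add_one]
    have d1 : (α + α + (2*β+1))/2 = (α+α)/2 + (2*β+1)/2 := by omega
    have d2 : (α+α)/2 = α := by omega
    have d3 : (2*β+1)/2 = β := by omega
    simp only [e1, e2, e3, if_pos, if_neg, if_true, if_false, d1, d2, d3, pow_add]
    rw [← mul_assoc, shuttle x y α, mul_assoc]
  · have e1 : ¬ Even (2*α+1 + (β + β)) := by simp [Nat.even_add, Nat.even_add_one]; try omega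
    have e2 : ¬ Even (2*α+1) := by simp [Nat.even_add_one]
    have e3 : Even (β + β) := by simp [Nat.even_add]
    have d1 : (2*α+1 + (β + β))/2 = (2*α+1)/2 + (β+β)/2 := by omega
    simp [e1, e2, e3, d1, pow_add, mul_assoc]
  · have e1 : Even (2*α+1 + (2*β+1)) := by simp [Nat.even_add, Nat.even_add_one]
    have e2 : ¬ Even (2*α+1) := by simp [Nat.even_add_one]
    have e3 : ¬ Even (2*β+1) := by simp [Nat.even_add_one]
    have d1 : (2*α+1 + (2*β+1))/2 = α + β + 1 := by omega
    have d2 : (2*α+1)/2 = α := by omega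
    have d3 : (2*β+1)/2 = β := by omega
    simp only [e1, e2, e3, if_pos, if_neg, if_true, if_false, d1, d2, d3]
    rw [shuttle y x, mul_assoc ((x*y)^α) x, ← mul_assoc x y, ← pow_succ' (x*y) β, ← pow_add]
    congr 1

section MulRow

variable {k : ℕ} (M : Matrix (Fin (k+1)) (Fin (k+1)) A) (F : ℤ → ℤ → A)

lemma sum_three (hM : ∀ j i : Fin (k+1), M j i = F j i)
    (hbl : ∀ i : Fin (k+1), F (-1) i = 0)
    (hbr : ∀ i : Fin (k+1), F ((k:ℤ)+1) i = 0) (j i : Fin (k+1)) (c : A)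
    (G : Fin (k+1) → A)
    (hG : ∀ l : Fin (k+1), G l =
        (if l = j then c * F j i else 0)
      + ((if (l:ℕ) = (j:ℕ) + 1 then F ((j:ℤ)+1) i else 0)
      + (if (l:ℕ) + 1 = (j:ℕ) then F ((j:ℤ)-1) i else 0))) :
    ∑ l, G l = c * F j i + F ((j:ℤ)-1) i + F ((j:ℤ)+1) i := by
  rw [Finset.sum_congr rfl (fun l _ => hG l), Finset.sum_add_distrib, Finset.sum_add_distrib]
  have h1 : ∑ l : Fin (k+1), (if l = j then c * F j i else 0) = c * F j i := by
    rw [Finset.sum_ite_eq' Finset.univ j (fun _ => c * F j i)]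
    simp
  have h2 : ∑ l : Fin (k+1), (if (l:ℕ) = (j:ℕ) + 1 then F ((j:ℤ)+1) i else 0)
      = F ((j:ℤ)+1) i := by
    by_cases hjk : (j:ℕ) < k
    · have : ∀ l : Fin (k+1), ((l:ℕ) = (j:ℕ) + 1) = (l = (⟨(j:ℕ)+1, by omega⟩ : Fin (k+1))) := by
        intro l; simp [Fin.ext_iff]
      simp_rw [this]
      rw [Finset.sum_ite_eq' Finset.univ _ (fun _ => F ((j:ℤ)+1) i)]
      simp
    · have hj : (j:ℕ) = k := by omega
      have : ∀ l : Fin (k+1), ¬ ((l:ℕ) = (j:ℕ) + 1) := by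
        intro l; omega
      simp only [this, if_false, Finset.sum_const_zero]
      have : ((j:ℤ)+1) = ((k:ℤ)+1) := by omega
      rw [this, hbr i]
  have h3 : ∑ l : Fin (k+1), (if (l:ℕ) + 1 = (j:ℕ) then F ((j:ℤ)-1) i else 0)
      = F ((j:ℤ)-1) i := by
    by_cases hj0 : 0 < (j:ℕ)
    · have : ∀ l : Fin (k+1), ((l:ℕ) + 1 = (j:ℕ)) ↔ (l = (⟨(j:ℕ)-1, by omega⟩ : Fin (k+1))) := by
        intro l; simp only [Fin.ext_iff]; omega
      simp_rw [this]
      rw [Finset.sum_ite_eq' Finset.univ _ (fun _ => F ((j:ℤ)-1) i)]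
      simp
    · have hj : (j:ℕ) = 0 := by omega
      have : ∀ l : Fin (k+1), ¬ ((l:ℕ) + 1 = (j:ℕ)) := by
        intro l; omega
      simp only [this, if_false, Finset.sum_const_zero]
      have : ((j:ℤ)-1) = (-1 : ℤ) := by omega
      rw [this, hbl i]
  rw [h1, h2, h3]
  ring

end MulRow

section MulRow2

variable {k : ℕ} (M : Matrix (Fin (k+1)) (Fin (k+1)) A) (F : ℤ → ℤ → A)

lemma mulS_apply (hM : ∀ j i : Fin (k+1), M j i = F j i)
    (hbl : ∀ i : Fin (k+1), F (-1) i = 0)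
    (hbr : ∀ i : Fin (k+1), F ((k:ℤ)+1) i = 0) (j i : Fin (k+1)) :
    (pathPhiS k * M) j i = if Even (j:ℕ) then
        -T (-1) * F j i + F ((j:ℤ)-1) i + F ((j:ℤ)+1) i
      else T 1 * F j i := by
  rw [Matrix.mul_apply]
  by_cases hj : Even (j:ℕ)
  · rw [if_pos hj]
    apply sum_three M F hM hbl hbr j i (-T (-1))
    intro l
    rw [hM l i]
    unfold pathPhiS
    split_ifs <;>
      (simp only [Fin.ext_iff, Nat.even_iff] at *
       first
        | ring1
        | (exfalso; omega)
        | (rw [show ((l:ℕ):ℤ) = ((j:ℕ):ℤ) from by omega]; ring1)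
        | (rw [show ((l:ℕ):ℤ) = ((j:ℕ):ℤ)+1 from by omega]; ring1)
        | (rw [show ((l:ℕ):ℤ) = ((j:ℕ):ℤ)-1 from by omega]; ring1))
  · rw [if_neg hj, Finset.sum_eq_single j]
    · rw [hM j i]
      unfold pathPhiS
      rw [if_neg (by simpa using hj), if_pos rfl]
    · intro b _ hbj
      rw [hM b i]
      unfold pathPhiS
      split_ifs <;>
        (simp only [Fin.ext_iff, Nat.even_iff] at *
         first
          | ring1
          | (exfalso; omega))
    · intro h; exact absurd (Finset.mem_univ j) h

lemma mulT_apply (hM : ∀ j i : Fin (k+1), M j i = F j i)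
    (hbl : ∀ i : Fin (k+1), F (-1) i = 0)
    (hbr : ∀ i : Fin (k+1), F ((k:ℤ)+1) i = 0) (j i : Fin (k+1)) :
    (pathPhiT k * M) j i = if Even (j:ℕ) then T 1 * F j i
      else -T (-1) * F j i + F ((j:ℤ)-1) i + F ((j:ℤ)+1) i := by
  rw [Matrix.mul_apply]
  by_cases hj : Even (j:ℕ)
  · rw [if_pos hj, Finset.sum_eq_single j]
    · rw [hM j i]
      unfold pathPhiT
      rw [if_neg (by simpa using hj), if_pos rfl]
    · intro b _ hbj
      rw [hM b i]
      unfold pathPhiT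
      split_ifs <;>
        (simp only [Fin.ext_iff, Nat.even_iff] at *
         first
          | ring1
          | (exfalso; omega))
    · intro h; exact absurd (Finset.mem_univ j) h
  · rw [if_neg hj]
    apply sum_three M F hM hbl hbr j i (-T (-1))
    intro l
    rw [hM l i]
    unfold pathPhiT
    split_ifs <;>
      (simp only [Fin.ext_iff, Nat.even_iff] at *
       first
        | ring1
        | (exfalso; omega)
        | (rw [show ((l:ℕ):ℤ) = ((j:ℕ):ℤ) from by omega]; ring1)
        | (rw [show ((l:ℕ):ℤ) = ((j:ℕ):ℤ)+1 from by omega]; ring1)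
        | (rw [show ((l:ℕ):ℤ) = ((j:ℕ):ℤ)-1 from by omega]; ring1))

end MulRow2

noncomputable def Fa (k r : ℕ) (j i : ℤ) : A :=
  if Even i then gg r (j-i) - gg r (-2-j-i) - gg r (2*k+2-j-i)
  else hh r (j-i) - hh r (-2-j-i) - hh r (2*k+2-j-i)

noncomputable def Fb (k r : ℕ) (j i : ℤ) : A :=
  if Even i then hh r (j-i) - hh r (-2-j-i) - hh r (2*k+2-j-i)
  else gg r (j-i) - gg r (-2-j-i) - gg r (2*k+2-j-i)

lemma Fa_bl (k r : ℕ) (hr : r ≤ k+2) (i : ℤ) (hi : 0 ≤ i) (hik : i ≤ k) :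
    Fa k r (-1) i = 0 := by
  unfold Fa
  have e : (-2:ℤ) - (-1) - i = -1 - i := by ring
  have z1 : gg r (2*(k:ℤ)+2+1-i) = 0 := gg_zero (by omega)
  have z2 : hh r (2*(k:ℤ)+2+1-i) = 0 := hh_zero (by omega)
  split_ifs <;> rw [e] <;> simp [z1, z2]

lemma Fa_br (k r : ℕ) (hr : r ≤ k+2) (i : ℤ) (hi : 0 ≤ i) (hik : i ≤ k) :
    Fa k r ((k:ℤ)+1) i = 0 := by
  unfold Fa
  have e : 2*(k:ℤ)+2-((k:ℤ)+1)-i = (k:ℤ)+1 - i := by ring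
  have z1 : gg r ((-2:ℤ)-((k:ℤ)+1)-i) = 0 := gg_zero (by omega)
  have z2 : hh r ((-2:ℤ)-((k:ℤ)+1)-i) = 0 := hh_zero (by omega)
  split_ifs <;> rw [e] <;> simp [z1, z2] <;> ring

lemma Fb_bl (k r : ℕ) (hr : r ≤ k+2) (i : ℤ) (hi : 0 ≤ i) (hik : i ≤ k) :
    Fb k r (-1) i = 0 := by
  unfold Fb
  have e : (-2:ℤ) - (-1) - i = -1 - i := by ring
  have z1 : gg r (2*(k:ℤ)+2+1-i) = 0 := gg_zero (by omega)
  have z2 : hh r (2*(k:ℤ)+2+1-i) = 0 := hh_zero (by omega)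
  split_ifs <;> rw [e] <;> simp [z1, z2]

lemma Fb_br (k r : ℕ) (hr : r ≤ k+2) (i : ℤ) (hi : 0 ≤ i) (hik : i ≤ k) :
    Fb k r ((k:ℤ)+1) i = 0 := by
  unfold Fb
  have e : 2*(k:ℤ)+2-((k:ℤ)+1)-i = (k:ℤ)+1 - i := by ring
  have z1 : gg r ((-2:ℤ)-((k:ℤ)+1)-i) = 0 := gg_zero (by omega)
  have z2 : hh r ((-2:ℤ)-((k:ℤ)+1)-i) = 0 := hh_zero (by omega)
  split_ifs <;> rw [e] <;> simp [z1, z2] <;> ring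

lemma Fa_step (k r : ℕ) (hr : 1 ≤ r) (j i : ℤ) :
    Fa k (r+1) j i = if Even (j + r) then T 1 * Fa k r j i
      else -T (-1) * Fa k r j i + Fa k r (j-1) i + Fa k r (j+1) i := by
  have e1 : (j-1) - i = (j-i) - 1 := by ring
  have e2 : (j+1) - i = (j-i) + 1 := by ring
  have e3 : (-2:ℤ)-(j-1)-i = (-2-j-i) + 1 := by ring
  have e4 : (-2:ℤ)-(j+1)-i = (-2-j-i) - 1 := by ring
  have e5 : 2*(k:ℤ)+2-(j-1)-i = (2*k+2-j-i) + 1 := by ring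
  have e6 : 2*(k:ℤ)+2-(j+1)-i = (2*k+2-j-i) - 1 := by ring
  unfold Fa
  by_cases hi : Even i <;> by_cases hjr : Even (j + r) <;>
    simp only [hi, hjr, if_true, if_false, eq_self_iff_true, if_pos, if_neg,
      not_true, not_false_iff]
  · rw [gg_step1 r (j-i) (by simp only [Int.even_iff] at *; omega),
      gg_step1 r (-2-j-i) (by simp only [Int.even_iff] at *; omega),
      gg_step1 r (2*k+2-j-i) (by simp only [Int.even_iff] at *; omega)]
    ring
  · rw [gg_step3 r (j-i) (by simp only [Int.even_iff] at *; omega),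
      gg_step3 r (-2-j-i) (by simp only [Int.even_iff] at *; omega),
      gg_step3 r (2*k+2-j-i) (by simp only [Int.even_iff] at *; omega),
      e1, e2, e3, e4, e5, e6]
    ring
  · rw [hh_step1 r (j-i) (by simp only [Int.even_iff] at *; omega),
      hh_step1 r (-2-j-i) (by simp only [Int.even_iff] at *; omega),
      hh_step1 r (2*k+2-j-i) (by simp only [Int.even_iff] at *; omega)]
    ring
  · rw [hh_step3 r hr (j-i) (by simp only [Int.even_iff] at *; omega),
      hh_step3 r hr (-2-j-i) (by simp only [Int.even_iff] at *; omega),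
      hh_step3 r hr (2*k+2-j-i) (by simp only [Int.even_iff] at *; omega),
      e1, e2, e3, e4, e5, e6]
    ring

lemma Fb_step (k r : ℕ) (hr : 1 ≤ r) (j i : ℤ) :
    Fb k (r+1) j i = if Even (j + r) then
      -T (-1) * Fb k r j i + Fb k r (j-1) i + Fb k r (j+1) i
      else T 1 * Fb k r j i := by
  have e1 : (j-1) - i = (j-i) - 1 := by ring
  have e2 : (j+1) - i = (j-i) + 1 := by ring
  have e3 : (-2:ℤ)-(j-1)-i = (-2-j-i) + 1 := by ring
  have e4 : (-2:ℤ)-(j+1)-i = (-2-j-i) - 1 := by ring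
  have e5 : 2*(k:ℤ)+2-(j-1)-i = (2*k+2-j-i) + 1 := by ring
  have e6 : 2*(k:ℤ)+2-(j+1)-i = (2*k+2-j-i) - 1 := by ring
  unfold Fb
  by_cases hi : Even i <;> by_cases hjr : Even (j + r) <;>
    simp only [hi, hjr, if_true, if_false, eq_self_iff_true, if_pos, if_neg,
      not_true, not_false_iff]
  · rw [hh_step3 r hr (j-i) (by simp only [Int.even_iff] at *; omega),
      hh_step3 r hr (-2-j-i) (by simp only [Int.even_iff] at *; omega),
      hh_step3 r hr (2*k+2-j-i) (by simp only [Int.even_iff] at *; omega),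
      e1, e2, e3, e4, e5, e6]
    ring
  · rw [hh_step1 r (j-i) (by simp only [Int.even_iff] at *; omega),
      hh_step1 r (-2-j-i) (by simp only [Int.even_iff] at *; omega),
      hh_step1 r (2*k+2-j-i) (by simp only [Int.even_iff] at *; omega)]
    ring
  · rw [gg_step3 r (j-i) (by simp only [Int.even_iff] at *; omega),
      gg_step3 r (-2-j-i) (by simp only [Int.even_iff] at *; omega),
      gg_step3 r (2*k+2-j-i) (by simp only [Int.even_iff] at *; omega),
      e1, e2, e3, e4, e5, e6]
    ring
  · rw [gg_step1 r (j-i) (by simp only [Int.even_iff] at *; omega),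
      gg_step1 r (-2-j-i) (by simp only [Int.even_iff] at *; omega),
      gg_step1 r (2*k+2-j-i) (by simp only [Int.even_iff] at *; omega)]
    ring

noncomputable def aMat (k r : ℕ) : Matrix (Fin (k+1)) (Fin (k+1)) A :=
  fun j i => Fa k r ((j:ℕ):ℤ) ((i:ℕ):ℤ)

noncomputable def bMat (k r : ℕ) : Matrix (Fin (k+1)) (Fin (k+1)) A :=
  fun j i => Fb k r ((j:ℕ):ℤ) ((i:ℕ):ℤ)

lemma base_a (k : ℕ) : pathPhiT k = aMat k 1 := by
  funext j i
  have hj := j.isLt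
  have hi := i.isLt
  have z1 : gg 1 ((-2:ℤ)-((j:ℕ):ℤ)-((i:ℕ):ℤ)) = 0 := gg_zero (by omega)
  have z2 : gg 1 (2*(k:ℤ)+2-((j:ℕ):ℤ)-((i:ℕ):ℤ)) = 0 := gg_zero (by omega)
  have z3 : hh 1 ((-2:ℤ)-((j:ℕ):ℤ)-((i:ℕ):ℤ)) = 0 := hh_zero (by omega)
  have z4 : hh 1 (2*(k:ℤ)+2-((j:ℕ):ℤ)-((i:ℕ):ℤ)) = 0 := hh_zero (by omega)
  show pathPhiT k j i = Fa k 1 ((j:ℕ):ℤ) ((i:ℕ):ℤ)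
  unfold pathPhiT Fa
  by_cases hEi : Even ((i:ℕ):ℤ)
  · rw [if_pos hEi, z1, z2,
      if_neg (show ¬¬Even (i:ℕ) by simpa [Int.even_coe_nat] using hEi)]
    unfold gg
    split_ifs <;>
      first
        | ring1
        | (exfalso; simp only [Fin.ext_iff, Int.even_iff, Nat.even_iff] at *; omega)
  · rw [if_neg hEi, z3, z4,
      if_pos (show ¬Even (i:ℕ) by simpa [Int.even_coe_nat] using hEi)]
    unfold hh
    split_ifs <;>
      first
        | ring1
        | (exfalso; simp only [Fin.ext_iff, Int.even_iff, Nat.even_iff] at *; omega)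

lemma base_b (k : ℕ) : pathPhiS k = bMat k 1 := by
  funext j i
  have hj := j.isLt
  have hi := i.isLt
  have z1 : gg 1 ((-2:ℤ)-((j:ℕ):ℤ)-((i:ℕ):ℤ)) = 0 := gg_zero (by omega)
  have z2 : gg 1 (2*(k:ℤ)+2-((j:ℕ):ℤ)-((i:ℕ):ℤ)) = 0 := gg_zero (by omega)
  have z3 : hh 1 ((-2:ℤ)-((j:ℕ):ℤ)-((i:ℕ):ℤ)) = 0 := hh_zero (by omega)
  have z4 : hh 1 (2*(k:ℤ)+2-((j:ℕ):ℤ)-((i:ℕ):ℤ)) = 0 := hh_zero (by omega)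
  show pathPhiS k j i = Fb k 1 ((j:ℕ):ℤ) ((i:ℕ):ℤ)
  unfold pathPhiS Fb
  by_cases hEi : Even ((i:ℕ):ℤ)
  · rw [if_pos hEi, z3, z4,
      if_pos (show Even (i:ℕ) by simpa [Int.even_coe_nat] using hEi)]
    unfold hh
    split_ifs <;>
      first
        | ring1
        | (exfalso; simp only [Fin.ext_iff, Int.even_iff, Nat.even_iff] at *; omega)
  · rw [if_neg hEi, z1, z2,
      if_neg (show ¬Even (i:ℕ) by simpa [Int.even_coe_nat] using hEi)]
    unfold gg
    split_ifs <;>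
      first
        | ring1
        | (exfalso; simp only [Fin.ext_iff, Int.even_iff, Nat.even_iff] at *; omega)

lemma parity_int_nat {n : ℕ} (j : Fin n) (r : ℕ) (h : Even r) :
    (Even (((j:ℕ):ℤ) + (r:ℤ)) ↔ Even (j:ℕ)) := by
  simp only [Int.even_iff, Nat.even_iff] at *
  omega

theorem alt_closed (k : ℕ) : ∀ r : ℕ, 1 ≤ r → r ≤ k+2 →
    altProd (pathPhiS k) (pathPhiT k) r = aMat k r ∧
    altProd (pathPhiT k) (pathPhiS k) r = bMat k r := by
  intro r
  induction r with
  | zero => omega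
  | succ r ih =>
    intro _ h2
    rcases Nat.eq_zero_or_pos r with rfl | hr
    · constructor
      · show altProd _ _ 1 = _
        unfold altProd
        norm_num [base_a]
      · show altProd _ _ 1 = _
        unfold altProd
        norm_num [base_b]
    · obtain ⟨iha, ihb⟩ := ih hr (by omega)
      constructor
      · rw [altProd_succ, iha]
        funext j i
        by_cases hEr : Even r
        · rw [if_pos hEr]
          rw [mulT_apply (aMat k r) (Fa k r) (fun _ _ => rfl)
            (fun i => Fa_bl k r (by omega) i (by positivity) (by exact_mod_cast Nat.lt_succ_iff.mp i.isLt))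
            (fun i => Fa_br k r (by omega) i (by positivity) (by exact_mod_cast Nat.lt_succ_iff.mp i.isLt)) j i]
          show _ = Fa k (r+1) _ _
          rw [Fa_step k r hr]
          by_cases hj : Even (j:ℕ)
          · rw [if_pos hj, if_pos ((parity_int_nat j r hEr).mpr hj)]
          · rw [if_neg hj, if_neg (fun hc => hj ((parity_int_nat j r hEr).mp hc))]
        · rw [if_neg hEr]
          rw [mulS_apply (aMat k r) (Fa k r) (fun _ _ => rfl)
            (fun i => Fa_bl k r (by omega) i (by positivity) (by exact_mod_cast Nat.lt_succ_iff.mp i.isLt))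
            (fun i => Fa_br k r (by omega) i (by positivity) (by exact_mod_cast Nat.lt_succ_iff.mp i.isLt)) j i]
          show _ = Fa k (r+1) _ _
          rw [Fa_step k r hr]
          have hpar : Even (((j:ℕ):ℤ) + (r:ℤ)) ↔ ¬ Even (j:ℕ) := by
            simp only [Int.even_iff, Nat.even_iff] at *
            omega
          by_cases hj : Even (j:ℕ)
          · rw [if_pos hj, if_neg (fun hc => (hpar.mp hc) hj)]
          · rw [if_neg hj, if_pos (hpar.mpr hj)]
      · rw [altProd_succ, ihb]
        funext j i
        by_cases hEr : Even r
        · rw [if_pos hEr]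
          rw [mulS_apply (bMat k r) (Fb k r) (fun _ _ => rfl)
            (fun i => Fb_bl k r (by omega) i (by positivity) (by exact_mod_cast Nat.lt_succ_iff.mp i.isLt))
            (fun i => Fb_br k r (by omega) i (by positivity) (by exact_mod_cast Nat.lt_succ_iff.mp i.isLt)) j i]
          show _ = Fb k (r+1) _ _
          rw [Fb_step k r hr]
          by_cases hj : Even (j:ℕ)
          · rw [if_pos hj, if_pos ((parity_int_nat j r hEr).mpr hj)]
          · rw [if_neg hj, if_neg (fun hc => hj ((parity_int_nat j r hEr).mp hc))]
        · rw [if_neg hEr]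
          rw [mulT_apply (bMat k r) (Fb k r) (fun _ _ => rfl)
            (fun i => Fb_bl k r (by omega) i (by positivity) (by exact_mod_cast Nat.lt_succ_iff.mp i.isLt))
            (fun i => Fb_br k r (by omega) i (by positivity) (by exact_mod_cast Nat.lt_succ_iff.mp i.isLt)) j i]
          show _ = Fb k (r+1) _ _
          rw [Fb_step k r hr]
          have hpar : Even (((j:ℕ):ℤ) + (r:ℤ)) ↔ ¬ Even (j:ℕ) := by
            simp only [Int.even_iff, Nat.even_iff] at *
            omega
          by_cases hj : Even (j:ℕ)
          · rw [if_pos hj, if_neg (fun hc => (hpar.mp hc) hj)]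
          · rw [if_neg hj, if_pos (hpar.mpr hj)]

noncomputable def negJ (k : ℕ) : Matrix (Fin (k+1)) (Fin (k+1)) A :=
  fun j i => if (j:ℕ) + (i:ℕ) = k then -1 else 0

set_option maxHeartbeats 1000000 in
lemma aMat_top (k : ℕ) : aMat k (k+2) = negJ k := by
  funext j i
  have hj := j.isLt
  have hi := i.isLt
  show Fa k (k+2) ((j:ℕ):ℤ) ((i:ℕ):ℤ) = _
  unfold Fa negJ gg hh
  split_ifs <;>
    first
      | ring1
      | (exfalso; simp only [Int.even_iff, Nat.even_iff] at *; omega)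

set_option maxHeartbeats 1000000 in
lemma bMat_top (k : ℕ) : bMat k (k+2) = negJ k := by
  funext j i
  have hj := j.isLt
  have hi := i.isLt
  show Fb k (k+2) ((j:ℕ):ℤ) ((i:ℕ):ℤ) = _
  unfold Fb negJ gg hh
  split_ifs <;>
    first
      | ring1
      | (exfalso; simp only [Int.even_iff, Nat.even_iff] at *; omega)

lemma negJ_mul_self (k : ℕ) : negJ k * negJ k = 1 := by
  funext j i
  rw [Matrix.mul_apply]
  rw [Finset.sum_eq_single (⟨k - (j:ℕ), by omega⟩ : Fin (k+1))]
  · unfold negJ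
    have hj := j.isLt
    have hi := i.isLt
    rw [Matrix.one_apply]
    split_ifs <;>
      first
        | ring1
        | (exfalso; simp only [Fin.ext_iff] at *; omega)
  · intro b _ hb
    unfold negJ
    have hj := j.isLt
    have hb' : (b:ℕ) ≠ k - (j:ℕ) := fun hc => hb (Fin.ext hc)
    split_ifs <;>
      first
        | ring1
        | (exfalso; omega)
  · intro h; exact absurd (Finset.mem_univ _) h

lemma T_one_ne : (T 1 : A) ≠ -T (-1) := by
  intro h
  have h1 : (T 1 : A).coeff 1 = ((-T (-1) : A)).coeff 1 := by rw [h]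
  have h2 : ((-T (-1) : A)).coeff 1 = -((T (-1) : A).coeff 1) := rfl
  rw [h2, T_apply, T_apply] at h1
  norm_num at h1

lemma ab_ne (k r : ℕ) (h1 : 1 ≤ r) (h2 : r ≤ k+1) : aMat k r ≠ bMat k r := by
  intro h
  rcases Nat.lt_or_ge r (k+1) with hrk | hrk
  · -- r ≤ k : compare entry (r, 0)
    have := congrFun (congrFun h ⟨r, by omega⟩) ⟨0, by omega⟩
    unfold aMat bMat Fa Fb at this
    simp only [Fin.val_mk, Nat.cast_zero] at this
    rw [if_pos (by norm_num), if_pos (by norm_num)] at this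
    rw [hh_zero (by omega), hh_zero (by omega), hh_zero (by omega)] at this
    rw [gg_zero (show r < ((-2:ℤ) - r - 0).natAbs by omega),
      gg_zero (show r < (2*(k:ℤ)+2 - r - 0).natAbs by omega)] at this
    rw [show gg r ((r:ℤ) - 0) = 1 by
      unfold gg
      rw [if_pos (by omega), if_pos (by simp only [Int.even_iff]; omega)]] at this
    norm_num at this
  · -- r = k+1 : compare entry (k, 1) if k ≥ 1, else 1x1 case
    have hr : r = k + 1 := by omega
    subst hr
    rcases Nat.eq_zero_or_pos k with rfl | hk
    · -- k = 0, r = 1 : entry (0,0) : T 1 vs -T(-1)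
      have hTS : pathPhiT 0 = pathPhiS 0 := by
        rw [base_a, base_b]; exact h
      have := congrFun (congrFun hTS ⟨0, by omega⟩) ⟨0, by omega⟩
      unfold pathPhiT pathPhiS at this
      norm_num at this
      exact T_one_ne this
    · -- k ≥ 1 : entry (k, 1) : -1 vs 0
      have := congrFun (congrFun h ⟨k, by omega⟩) ⟨1, by omega⟩
      unfold aMat bMat Fa Fb at this
      simp only [Fin.val_mk, Nat.cast_one] at this
      rw [if_neg (by norm_num), if_neg (by norm_num)] at this
      rw [hh_zero (show k+1 ≤ ((-2:ℤ) - k - 1).natAbs by omega),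
        hh_zero (show k+1 ≤ (2*(k:ℤ)+2 - k - 1).natAbs by omega),
        gg_zero (show k+1 < ((-2:ℤ) - k - 1).natAbs by omega)] at this
      rw [show hh (k+1) ((k:ℤ) - 1) = -1 by
          unfold hh
          rw [if_pos (by omega), if_pos (by simp only [Int.even_iff]; omega)]] at this
      rw [show gg (k+1) ((k:ℤ) - 1) = 1 by
          unfold gg
          rw [if_pos (by omega), if_pos (by simp only [Int.even_iff]; omega)]] at this
      rw [show gg (k+1) (2*(k:ℤ)+2 - k - 1) = 1 by
          unfold gg
          rw [if_pos (by omega), if_pos (by simp only [Int.even_iff]; omega)]] at this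
      norm_num at this

lemma alt_pow (k : ℕ) (l : ℕ) :
    altProd (pathPhiS k) (pathPhiT k) ((k+2) * l) = (negJ k)^l ∧
    altProd (pathPhiT k) (pathPhiS k) ((k+2) * l) = (negJ k)^l := by
  induction l with
  | zero =>
    constructor <;> (show altProd _ _ 0 = 1; unfold altProd; norm_num)
  | succ l ih =>
    have hm : (k+2) * (l+1) = (k+2) * l + (k+2) := by ring
    have ha : altProd (pathPhiS k) (pathPhiT k) (k+2) = negJ k := by
      rw [(alt_closed k (k+2) (by omega) le_rfl).1, aMat_top]
    have hb : altProd (pathPhiT k) (pathPhiS k) (k+2) = negJ k := by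
      rw [(alt_closed k (k+2) (by omega) le_rfl).2, bMat_top]
    constructor
    · rw [hm, altProd_add, ha, pow_succ]
      split_ifs with hE
      · rw [ih.1]
      · rw [ih.2]
    · rw [hm, altProd_add, hb, pow_succ]
      split_ifs with hE
      · rw [ih.2]
      · rw [ih.1]

theorem braid_iff' (k n : ℕ) :
    altProd (pathPhiS k) (pathPhiT k) n = altProd (pathPhiT k) (pathPhiS k) n ↔
      (k + 2) ∣ n := by
  have hu0 : IsUnit (negJ k) :=
    ⟨⟨negJ k, negJ k, negJ_mul_self k, negJ_mul_self k⟩, rfl⟩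
  have hu : IsUnit ((negJ k) ^ (n / (k+2))) := hu0.pow _
  constructor
  · intro heq
    rw [← Nat.mod_add_div n (k+2)] at heq
    rw [altProd_add, altProd_add] at heq
    rw [(alt_pow k (n / (k+2))).1, (alt_pow k (n / (k+2))).2] at heq
    have hcan := hu.mul_right_cancel heq
    have hr0 : n % (k+2) = 0 := by
      by_contra hne
      have h1 : 1 ≤ n % (k+2) := by omega
      have h2 : n % (k+2) ≤ k+1 := by
        have := Nat.mod_lt n (show 0 < k+2 by omega)
        omega
      have hA := (alt_closed k (n % (k+2)) h1 (by omega)).1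
      have hB := (alt_closed k (n % (k+2)) h1 (by omega)).2
      split_ifs at hcan with hE
      · rw [hA, hB] at hcan
        exact ab_ne k (n % (k+2)) h1 h2 hcan
      · rw [hA, hB] at hcan
        exact ab_ne k (n % (k+2)) h1 h2 hcan.symm
    exact Nat.dvd_of_mod_eq_zero hr0
  · rintro ⟨l, rfl⟩
    rw [(alt_pow k l).1, (alt_pow k l).2]

/-- `[..φ_sφ_t]_n = [..φ_tφ_s]_n` if and only if `k + 2` divides `n`. -/
theorem pathPhi_braid_iff (k n : ℕ) :
    altProd (pathPhiS k) (pathPhiT k) n = altProd (pathPhiT k) (pathPhiS k) n ↔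
      (k + 2) ∣ n :=
  braid_iff' k n
end
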